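/- arXiv:1108.4989 — 5 statements merged into one kernel-verified Lean document; each statement's English description precedes it below -/
import Mathlib

section
/- Let 0 ≠ m ∈ ℤ^d and let Γ ⊆ ℤ^d be a finite-index subgroup. Then |Ω_Γ ∩ H_m| ≤ (‖m‖_∞ / ⟨Γ⟩) · |Ω_Γ|, where H_m = {s ∈ 𝕊^d : s^m = 1}. -/
open scoped BigOperators ENNReal

noncomputable section

/-- `R_d = ℤ[ℤ^d]`, the ring of Laurent polynomials with integer coefficients
in `d` commuting variables. -/
abbrev LP (d : ℕ) := AddMonoidAlgebra ℤ (Fin d → ℤ)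

/-- Evaluation of a Laurent polynomial at a point `z ∈ ℂ^d` (with nonzero
coordinates understood): `f(z) = ∑ₙ fₙ z^n`. -/
noncomputable def lEval {d : ℕ} (f : LP d) (z : Fin d → ℂ) : ℂ :=
  Finsupp.sum f.coeff fun n c => (c : ℂ) * ∏ i, z i ^ (n i)

/-- The multiplicative `d`-torus `𝕊^d ⊆ ℂ^d`. -/
def torus (d : ℕ) : Set (Fin d → ℂ) := {z | ∀ i, ‖z i‖ = 1}

/-- The unitary variety `U(f) = {s ∈ 𝕊^d : f(s) = 0}`. -/
def uVar {d : ℕ} (f : LP d) : Set (Fin d → ℂ) := {z ∈ torus d | lEval f z = 0}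

/-- Atorality of an irreducible Laurent polynomial: there is `h ∉ (f)`
vanishing on all of `U(f)`. -/
def IsAtoralIrred {d : ℕ} (f : LP d) : Prop :=
  ∃ h : LP d, h ∉ Ideal.span ({f} : Set (LP d)) ∧ ∀ z ∈ uVar f, lEval h z = 0

/-- A general Laurent polynomial is atoral if every irreducible factor is atoral. -/
def IsAtoral {d : ℕ} (f : LP d) : Prop :=
  ∀ g : LP d, Irreducible g → g ∣ f → IsAtoralIrred g

/-- The sup norm `‖m‖_∞` of `m ∈ ℤ^d`. -/
def normInf {d : ℕ} (m : Fin d → ℤ) : ℕ := Finset.univ.sup fun i => (m i).natAbs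

/-- `⟨Γ⟩ = min {‖m‖_∞ : 0 ≠ m ∈ Γ}`. -/
noncomputable def gammaMin {d : ℕ} (Γ : AddSubgroup (Fin d → ℤ)) : ℕ :=
  sInf (normInf '' {m : Fin d → ℤ | m ∈ Γ ∧ m ≠ 0})

/-- The character power `ω^m = ω₁^{m₁} ⋯ ω_d^{m_d}`. -/
noncomputable def cPow {d : ℕ} (ω : Fin d → ℂ) (m : Fin d → ℤ) : ℂ := ∏ i, ω i ^ (m i)

/-- `Ω_Γ = {ω ∈ 𝕊^d : ω^m = 1 for all m ∈ Γ}`, the dual group of `ℤ^d/Γ`. -/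
def omegaGamma {d : ℕ} (Γ : AddSubgroup (Fin d → ℤ)) : Set (Fin d → ℂ) :=
  {ω ∈ torus d | ∀ m ∈ Γ, cPow ω m = 1}

/-- The logarithmic Mahler measure `m(f) = ∫_{[0,1]^d} log |f(e^{2πit})| dt`. -/
noncomputable def mahlerM {d : ℕ} (f : LP d) : ℝ :=
  ∫ t in Set.univ.pi (fun _ : Fin d => Set.Icc (0:ℝ) 1),
    Real.log ‖lEval f fun i => Complex.exp (2 * Real.pi * Complex.I * (t i))‖

/-- The Riemann sum `(1/|Ω_Γ|) ∑_{ω ∈ Ω_Γ, f(ω) ≠ 0} log |f(ω)|`. -/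
noncomputable def riemannSum {d : ℕ} (f : LP d) (Γ : AddSubgroup (Fin d → ℤ)) : ℝ :=
  (1 / ((omegaGamma Γ).ncard : ℝ)) *
    ∑ᶠ ω ∈ {ω ∈ omegaGamma Γ | lEval f ω ≠ 0}, Real.log ‖lEval f ω‖

/-- The Riemann sums of `log |f|` converge to the logarithmic Mahler measure `m(f)`. -/
def riemannConv {d : ℕ} (f : LP d) : Prop :=
  ∀ ε > (0:ℝ), ∃ L > (0:ℝ), ∀ Γ : AddSubgroup (Fin d → ℤ), Γ.FiniteIndex →
    (gammaMin Γ : ℝ) > L → |riemannSum f Γ - mahlerM f| < ε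

/-- The circle group `𝕋 = ℝ/ℤ`. -/
abbrev TT := AddCircle (1 : ℝ)

/-- `X_f = {x ∈ 𝕋^{ℤ^d} : ∑ₘ fₘ x_{n+m} = 0 for all n}`. -/
def Xf {d : ℕ} (f : LP d) : Set ((Fin d → ℤ) → TT) :=
  {x | ∀ n : Fin d → ℤ, (Finsupp.sum f.coeff fun m c => c • x (n + m)) = 0}

/-- The group `Fix_Γ(α_f)` of `Γ`-periodic points of `X_f`. -/
def fixSet {d : ℕ} (f : LP d) (Γ : AddSubgroup (Fin d → ℤ)) : Set ((Fin d → ℤ) → TT) :=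
  {x ∈ Xf f | ∀ n : Fin d → ℤ, ∀ m ∈ Γ, x (n + m) = x n}

/-- The group `Δ¹(X_f)` of summable homoclinic points of `α_f`. -/
def delta1 {d : ℕ} (f : LP d) : Set ((Fin d → ℤ) → TT) :=
  {x ∈ Xf f | Summable fun n => ‖x n‖}

/-- The adjoint `f*(u) = f(u⁻¹)`. -/
def adjLP {d : ℕ} (f : LP d) : LP d :=
  AddMonoidAlgebra.ofCoeff (Finsupp.equivMapDomain (Equiv.neg (Fin d → ℤ)) f.coeff)

/-- The shift `(α_f^m x)_n = x_{m+n}`. -/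
def shiftMap {d : ℕ} (m : Fin d → ℤ) (x : (Fin d → ℤ) → TT) : (Fin d → ℤ) → TT :=
  fun n => x (m + n)

/-- The ideal `n_f` of Laurent polynomials vanishing on `U(f)`. -/
def nSet {d : ℕ} (f : LP d) : Set (LP d) := {h | ∀ z ∈ uVar f, lEval h z = 0}

/-- The ideal `m_f` of `h` such that `h/f` has an absolutely convergent Fourier
series on `𝕊^d`. -/
def mSet {d : ℕ} (f : LP d) : Set (LP d) :=
  {h | ∃ w : (Fin d → ℤ) → ℂ, Summable (fun n => ‖w n‖) ∧
    ∀ z ∈ torus d, (∑' n, w n * cPow z n) * lEval f z = lEval h z}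

/-- The subgroup `H_m = {s ∈ 𝕊^d : s^m = 1}`. -/
def subH {d : ℕ} (m : Fin d → ℤ) : Set (Fin d → ℂ) := {s ∈ torus d | cPow s m = 1}

/-- `Ω`, the set of torsion points of `𝕊^d`. -/
def torsionPts (d : ℕ) : Set (Fin d → ℂ) :=
  {ω ∈ torus d | ∀ i, ∃ k : ℕ, 0 < k ∧ ω i ^ k = 1}

/-- `V_Γ(f)`, the space of bounded (indeed `Γ`-periodic) real points annihilated
by `f(σ̃)`. -/
def VGamma {d : ℕ} (f : LP d) (Γ : AddSubgroup (Fin d → ℤ)) : Set ((Fin d → ℤ) → ℝ) :=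
  {w | (∀ n : Fin d → ℤ, ∀ m ∈ Γ, w (n + m) = w n) ∧
    ∀ n : Fin d → ℤ, (Finsupp.sum f.coeff fun k c => (c : ℝ) * w (n + k)) = 0}

/-- The coordinatewise reduction `η : ℓ^∞(ℤ^d, ℝ) → 𝕋^{ℤ^d}`. -/
noncomputable def etaMap {d : ℕ} (w : (Fin d → ℤ) → ℝ) : (Fin d → ℤ) → TT :=
  fun n => (w n : TT)

/-- `Fix_Δ(σ)`, the set of points of `𝕋^{ℤ^d}` that are `Δ`-periodic for the full shift. -/
def fixSigma {d : ℕ} (Δ : Set (Fin d → ℤ)) : Set ((Fin d → ℤ) → TT) :=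
  {x | ∀ n : Fin d → ℤ, ∀ m ∈ Δ, x (n + m) = x n}

/-- The Euclidean distance on `ℂ^d ≅ ℝ^{2d}`. -/
noncomputable def euclid {d : ℕ} (x y : Fin d → ℂ) : ℝ :=
  Real.sqrt (∑ i, ‖x i - y i‖ ^ 2)

end

section Aux

open scoped BigOperators

variable {d : ℕ}

lemma addChar_map_sum {A M : Type*} [AddCommMonoid A] [CommMonoid M] (χ : AddChar A M)
    {ι : Type*} (s : Finset ι) (f : ι → A) :
    χ (∑ i ∈ s, f i) = ∏ i ∈ s, χ (f i) := by
  induction s using Finset.cons_induction with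
  | empty => simp
  | cons a s ha ih => rw [Finset.sum_cons, Finset.prod_cons, AddChar.map_add_eq_mul, ih]

lemma abs_eq_one_of_pow {z : ℂ} {n : ℕ} (hn : n ≠ 0) (h : z ^ n = 1) :
    ‖z‖ = 1 := by
  have h1 : ‖z‖ ^ n = 1 := by
    rw [← norm_pow, h, norm_one]
  rcases lt_trichotomy (‖z‖) 1 with hlt | heq | hgt
  · have := pow_lt_one₀ (norm_nonneg z) hlt hn
    rw [h1] at this; exact absurd this (lt_irrefl _)
  · exact heq
  · have := one_lt_pow₀ hgt hn
    rw [h1] at this; exact absurd this (lt_irrefl _)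

lemma cPow_single (ω : Fin d → ℂ) (i : Fin d) (c : ℤ) :
    cPow ω (Pi.single i c) = ω i ^ c := by
  unfold cPow
  rw [Finset.prod_eq_single i (fun j _ hj => by rw [Pi.single_eq_of_ne hj, zpow_zero])
    (fun h => absurd (Finset.mem_univ i) h)]
  rw [Pi.single_eq_same]

lemma abs_cPow {ω : Fin d → ℂ} (hω : ω ∈ torus d) (k : Fin d → ℤ) :
    ‖cPow ω k‖ = 1 := by
  unfold cPow
  rw [norm_prod]
  refine Finset.prod_eq_one fun i _ => ?_
  rw [norm_zpow, hω i, one_zpow]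

lemma cPow_ne_zero {ω : Fin d → ℂ} (hω : ω ∈ torus d) (k : Fin d → ℤ) :
    cPow ω k ≠ 0 := fun h => by
  have := abs_cPow hω k
  rw [h, norm_zero] at this
  exact zero_ne_one this

lemma cPow_mul_point (x y : Fin d → ℂ) (k : Fin d → ℤ) :
    cPow (fun i => x i * y i) k = cPow x k * cPow y k := by
  unfold cPow
  rw [← Finset.prod_mul_distrib]
  exact Finset.prod_congr rfl fun i _ => mul_zpow _ _ _

lemma omega_mul {Γ : AddSubgroup (Fin d → ℤ)} {x y : Fin d → ℂ}
    (hx : x ∈ omegaGamma Γ) (hy : y ∈ omegaGamma Γ) :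
    (fun i => x i * y i) ∈ omegaGamma Γ := by
  refine ⟨?_, fun k hk => ?_⟩
  · intro i; rw [norm_mul, hx.1 i, hy.1 i, one_mul]
  · rw [cPow_mul_point, hx.2 k hk, hy.2 k hk, one_mul]

lemma charToOmega {Γ : AddSubgroup (Fin d → ℤ)} [Finite ((Fin d → ℤ) ⧸ Γ)]
    (χ : AddChar ((Fin d → ℤ) ⧸ Γ) ℂ) :
    (fun i => χ (QuotientAddGroup.mk (Pi.single i 1))) ∈ omegaGamma Γ ∧
      ∀ k : Fin d → ℤ,
        cPow (fun i => χ (QuotientAddGroup.mk (Pi.single i 1))) k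
          = χ (QuotientAddGroup.mk k) := by
  set G := (Fin d → ℤ) ⧸ Γ
  have hcard : Nat.card G ≠ 0 := Nat.card_ne_zero.mpr ⟨⟨0⟩, inferInstance⟩
  have hroot : ∀ x : G, χ x ^ Nat.card G = 1 := fun x => by
    rw [← AddChar.map_nsmul_eq_pow, card_nsmul_eq_zero', AddChar.map_zero_eq_one]
  have hb : ∀ k : Fin d → ℤ,
      cPow (fun i => χ (QuotientAddGroup.mk (Pi.single i 1))) k
        = χ (QuotientAddGroup.mk k) := by
    intro k
    have hk : (QuotientAddGroup.mk k : G)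
        = ∑ i : Fin d, (k i) • (QuotientAddGroup.mk (Pi.single i 1) : G) := by
      have hstep : ∀ i : Fin d, (k i) • (QuotientAddGroup.mk (Pi.single i 1) : G)
          = (QuotientAddGroup.mk (Pi.single i (k i)) : G) := by
        intro i
        rw [← QuotientAddGroup.mk_zsmul]
        congr 1
        funext j
        by_cases h : j = i
        · subst h; simp
        · simp [Pi.single_eq_of_ne h]
      rw [Finset.sum_congr rfl fun i _ => hstep i]
      show QuotientAddGroup.mk' Γ k = ∑ i : Fin d, QuotientAddGroup.mk' Γ (Pi.single i (k i))
      rw [← map_sum, Finset.univ_sum_single]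
    rw [hk, addChar_map_sum]
    unfold cPow
    exact Finset.prod_congr rfl fun i _ => (AddChar.map_zsmul_eq_zpow χ (k i) _).symm
  refine ⟨⟨?_, fun k hk => ?_⟩, hb⟩
  · intro i; exact abs_eq_one_of_pow hcard (hroot _)
  · rw [hb k, (QuotientAddGroup.eq_zero_iff k).mpr hk, AddChar.map_zero_eq_one]

lemma mem_of_forall_cPow {Γ : AddSubgroup (Fin d → ℤ)} [Finite ((Fin d → ℤ) ⧸ Γ)]
    {k : Fin d → ℤ} (h : ∀ ω ∈ omegaGamma Γ, cPow ω k = 1) : k ∈ Γ := by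
  by_contra hk
  have hk0 : (QuotientAddGroup.mk k : (Fin d → ℤ) ⧸ Γ) ≠ 0 :=
    fun h0 => hk ((QuotientAddGroup.eq_zero_iff k).mp h0)
  obtain ⟨χ, hχ⟩ := AddChar.exists_apply_ne_zero.mpr hk0
  obtain ⟨hmem, hpow⟩ := charToOmega (Γ := Γ) χ
  exact hχ ((hpow k).symm.trans (h _ hmem))

lemma omega_finite (Γ : AddSubgroup (Fin d → ℤ)) (hΓ : Γ.FiniteIndex) :
    (omegaGamma Γ).Finite := by
  haveI := hΓ
  set n := Γ.index with hn
  have hn0 : n ≠ 0 := hΓ.index_ne_zero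
  have hfin : ({z : ℂ | z ^ n = 1}).Finite := by
    refine Set.Finite.subset (Polynomial.nthRoots n (1 : ℂ)).toFinset.finite_toSet ?_
    intro z hz
    rw [Finset.mem_coe, Multiset.mem_toFinset, Polynomial.mem_nthRoots (Nat.pos_of_ne_zero hn0)]
    exact hz
  refine Set.Finite.subset (Set.Finite.pi (fun i : Fin d => hfin)) ?_
  intro ω hω
  rw [Set.mem_pi]
  intro i _
  have hmem : ((n : ℤ) • Pi.single i (1 : ℤ) : Fin d → ℤ) ∈ Γ := by
    rw [natCast_zsmul]
    exact AddSubgroup.nsmul_index_mem Γ _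
  have := hω.2 _ hmem
  have hsingle : ((n : ℤ) • Pi.single i (1 : ℤ) : Fin d → ℤ) = Pi.single i (n : ℤ) := by
    funext j
    by_cases h : j = i
    · subst h; simp
    · simp [Pi.single_eq_of_ne h]
  rw [hsingle, cPow_single] at this
  show ω i ^ n = 1
  rw [← zpow_natCast]
  exact this

end Aux

/-- `|Ω_Γ ∩ H_m| ≤ (‖m‖_∞ / ⟨Γ⟩) |Ω_Γ|`. -/
theorem slice_estimate {d : ℕ} (m : Fin d → ℤ) (hm : m ≠ 0)
    (Γ : AddSubgroup (Fin d → ℤ)) (hΓ : Γ.FiniteIndex) :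
    ((omegaGamma Γ ∩ subH m).ncard : ℝ) ≤
      ((normInf m : ℝ) / (gammaMin Γ : ℝ)) * ((omegaGamma Γ).ncard : ℝ) := by
  classical
  haveI := hΓ
  haveI : Finite ((Fin d → ℤ) ⧸ Γ) := AddSubgroup.finite_quotient_of_finiteIndex
  have hfin : (omegaGamma Γ).Finite := omega_finite Γ hΓ
  have hKfin : (omegaGamma Γ ∩ subH m).Finite := hfin.subset Set.inter_subset_left
  set S : Finset (Fin d → ℂ) := hfin.toFinset with hS
  set T : Finset ℂ := S.image (fun ω => cPow ω m) with hT
  set N : ℕ := T.card with hN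
  set KF : Finset (Fin d → ℂ) := hKfin.toFinset with hKF
  have hmemS : ∀ ω, ω ∈ S ↔ ω ∈ omegaGamma Γ := fun ω => hfin.mem_toFinset
  -- `1 ∈ Ω_Γ`
  have hone : (fun _ : Fin d => (1 : ℂ)) ∈ omegaGamma Γ := by
    refine ⟨by intro i; simp, fun k hk => ?_⟩
    unfold cPow
    exact Finset.prod_eq_one fun i _ => one_zpow _
  have hTne : T.Nonempty := ⟨_, Finset.mem_image_of_mem _ ((hmemS _).mpr hone)⟩
  have hN1 : 1 ≤ N := Finset.card_pos.mpr hTne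
  -- every element of `T` is nonzero
  have hTnz : ∀ v ∈ T, v ≠ 0 := by
    intro v hv
    obtain ⟨ω, hω, rfl⟩ := Finset.mem_image.mp hv
    exact cPow_ne_zero ((hmemS ω).mp hω).1 m
  -- `T` is closed under multiplication
  have hTmul : ∀ v ∈ T, ∀ x ∈ T, v * x ∈ T := by
    intro v hv x hx
    obtain ⟨ω, hω, rfl⟩ := Finset.mem_image.mp hv
    obtain ⟨ω', hω', rfl⟩ := Finset.mem_image.mp hx
    rw [← cPow_mul_point]
    exact Finset.mem_image_of_mem _
      ((hmemS _).mpr (omega_mul ((hmemS ω).mp hω) ((hmemS ω').mp hω')))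
  -- every element of `T` satisfies `v ^ N = 1`
  have hkey : ∀ v ∈ T, v ^ N = 1 := by
    intro v hv
    have hv0 : v ≠ 0 := hTnz v hv
    have himg : T.image (fun x => v * x) = T := by
      refine Finset.eq_of_subset_of_card_le ?_ ?_
      · intro x hx
        obtain ⟨y, hy, rfl⟩ := Finset.mem_image.mp hx
        exact hTmul v hv y hy
      · rw [Finset.card_image_of_injective _ (mul_right_injective₀ hv0)]
    have hprod : ∏ x ∈ T, (v * x) = ∏ x ∈ T, x := by
      conv_rhs => rw [← himg]
      rw [Finset.prod_image (fun x _ y _ h => mul_left_cancel₀ hv0 h)]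
    rw [Finset.prod_mul_distrib, Finset.prod_const] at hprod
    have hpne : (∏ x ∈ T, x) ≠ 0 := Finset.prod_ne_zero_iff.mpr fun x hx => hTnz x hx
    calc v ^ N = v ^ N * (∏ x ∈ T, x) * (∏ x ∈ T, x)⁻¹ := by
          field_simp
      _ = (∏ x ∈ T, x) * (∏ x ∈ T, x)⁻¹ := by rw [hprod]
      _ = 1 := mul_inv_cancel₀ hpne
  -- `(N : ℤ) • m ∈ Γ`
  have hcPowN : ∀ ω ∈ omegaGamma Γ, cPow ω ((N : ℤ) • m) = 1 := by
    intro ω hω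
    have : cPow ω ((N : ℤ) • m) = (cPow ω m) ^ N := by
      unfold cPow
      rw [← Finset.prod_pow]
      refine Finset.prod_congr rfl fun i _ => ?_
      have : ((N : ℤ) • m) i = m i * (N : ℤ) := by
        simp [mul_comm]
      rw [this, zpow_mul, zpow_natCast]
    rw [this]
    exact hkey _ (Finset.mem_image_of_mem _ ((hmemS ω).mpr hω))
  have hmemΓ : ((N : ℤ) • m) ∈ Γ := mem_of_forall_cPow hcPowN
  have hne0 : ((N : ℤ) • m) ≠ 0 := by
    intro h
    apply hm
    funext i
    have hNi : ((N : ℤ)) * m i = 0 := by simpa using congrFun h i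
    have hNne : (N : ℤ) ≠ 0 := by exact_mod_cast Nat.one_le_iff_ne_zero.mp hN1
    exact (mul_eq_zero.mp hNi).resolve_left hNne
  -- `⟨Γ⟩ ≤ N * ‖m‖_∞` and `⟨Γ⟩ ≥ 1`
  have hmemset : normInf ((N : ℤ) • m) ∈ normInf '' {m : Fin d → ℤ | m ∈ Γ ∧ m ≠ 0} :=
    ⟨_, ⟨hmemΓ, hne0⟩, rfl⟩
  have hsup : normInf ((N : ℤ) • m) ≤ N * normInf m := by
    refine Finset.sup_le fun i _ => ?_
    show (((N : ℤ) • m) i).natAbs ≤ N * normInf m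
    have : ((N : ℤ) • m) i = (N : ℤ) * m i := rfl
    rw [this, Int.natAbs_mul, Int.natAbs_natCast]
    exact Nat.mul_le_mul_left _
      (Finset.le_sup (f := fun j => (m j).natAbs) (Finset.mem_univ i))
  have hgle : gammaMin Γ ≤ N * normInf m := le_trans (Nat.sInf_le hmemset) hsup
  have hg1 : 1 ≤ gammaMin Γ := by
    have hmemInf := Nat.sInf_mem ⟨_, hmemset⟩
    obtain ⟨m', ⟨hm'Γ, hm'ne⟩, hm'eq⟩ := hmemInf
    show 1 ≤ sInf (normInf '' {m : Fin d → ℤ | m ∈ Γ ∧ m ≠ 0})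
    rw [← hm'eq]
    have : ∃ i, m' i ≠ 0 := by
      by_contra h
      push_neg at h
      exact hm'ne (funext h)
    obtain ⟨i, hi⟩ := this
    calc 1 ≤ (m' i).natAbs := Nat.one_le_iff_ne_zero.mpr (Int.natAbs_ne_zero.mpr hi)
      _ ≤ normInf m' := Finset.le_sup (f := fun j => (m' j).natAbs) (Finset.mem_univ i)
  -- counting: `N * |K| ≤ |Ω|`
  have hfiber : ∀ v ∈ T, KF.card ≤ (S.filter (fun ω => cPow ω m = v)).card := by
    intro v hv
    obtain ⟨ω0, hω0, rfl⟩ := Finset.mem_image.mp hv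
    have hω0Ω := (hmemS ω0).mp hω0
    refine Finset.card_le_card_of_injOn (fun k => fun i => ω0 i * k i) ?_ ?_
    · intro k hk
      rw [Finset.mem_coe, hKF, Set.Finite.mem_toFinset] at hk
      obtain ⟨hkΩ, hkT, hkH⟩ := hk
      rw [Finset.mem_coe, Finset.mem_filter]
      refine ⟨(hmemS _).mpr (omega_mul hω0Ω hkΩ), ?_⟩
      rw [cPow_mul_point, hkH, mul_one]
    · intro a ha b hb hab
      funext i
      have := congrFun hab i
      have h0 : ω0 i ≠ 0 := fun h => by
        have := hω0Ω.1 i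
        rw [h, norm_zero] at this
        exact zero_ne_one this
      exact mul_left_cancel₀ h0 this
  have hcount : N * KF.card ≤ S.card := by
    rw [Finset.card_eq_sum_card_fiberwise
      (fun x hx => Finset.mem_image_of_mem (fun ω => cPow ω m) hx : ∀ x ∈ S, cPow x m ∈ T)]
    calc N * KF.card = ∑ _v ∈ T, KF.card := by rw [Finset.sum_const, smul_eq_mul]
      _ ≤ ∑ v ∈ T, (S.filter (fun ω => cPow ω m = v)).card :=
          Finset.sum_le_sum hfiber
  -- arithmetic conclusion
  have hKcard : (omegaGamma Γ ∩ subH m).ncard = KF.card := Set.ncard_eq_toFinset_card _ hKfin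
  have hΩcard : (omegaGamma Γ).ncard = S.card := Set.ncard_eq_toFinset_card _ hfin
  rw [hKcard, hΩcard]
  have hg0 : (0 : ℝ) < (gammaMin Γ : ℝ) := by exact_mod_cast Nat.lt_of_lt_of_le Nat.zero_lt_one hg1
  rw [div_mul_eq_mul_div, le_div_iff₀ hg0]
  have h1 : (gammaMin Γ : ℝ) ≤ (N : ℝ) * (normInf m : ℝ) := by exact_mod_cast hgle
  have h2 : (N : ℝ) * (KF.card : ℝ) ≤ (S.card : ℝ) := by exact_mod_cast hcount
  have hK0 : (0 : ℝ) ≤ (KF.card : ℝ) := Nat.cast_nonneg _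
  have ha0 : (0 : ℝ) ≤ (normInf m : ℝ) := Nat.cast_nonneg _
  calc (KF.card : ℝ) * (gammaMin Γ : ℝ)
      ≤ (KF.card : ℝ) * ((N : ℝ) * (normInf m : ℝ)) := mul_le_mul_of_nonneg_left h1 hK0
    _ = (normInf m : ℝ) * ((N : ℝ) * (KF.card : ℝ)) := by ring
    _ ≤ (normInf m : ℝ) * (S.card : ℝ) := mul_le_mul_of_nonneg_left h2 ha0
end

section
/- Let Γ ⊆ ℤ^d be a finite-index subgroup and let f ∈ R_d be nonzero. Let V_Γ(f) = {w ∈ ℓ^∞(ℤ^d, ℝ) : w_{n+m} = w_n for all n ∈ ℤ^d and m ∈ Γ, and ∑_{k∈ℤ^d} f_k w_{n+k} = 0 for all n ∈ ℤ^d}. Then: (a) V_Γ(f) equals the real linear span of the functions n ↦ Re(ω^n) and n ↦ Im(ω^n) for ω ranging over U(f) ∩ Ω_Γ; and (b) the image of V_Γ(f) under the coordinatewise reduction map η: ℓ^∞(ℤ^d, ℝ) → 𝕋^{ℤ^d}, η(w)_n = w_n (mod 1), equals Fix°_Γ(α_f), the connected component of the identity in Fix_Γ(α_f). -/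
open scoped BigOperators ENNReal

noncomputable section StHelpers

namespace St13

variable {d : ℕ}

lemma cPow_def (ω : Fin d → ℂ) (m : Fin d → ℤ) : cPow ω m = ∏ i, ω i ^ (m i) := rfl

lemma lEval_eq (f : LP d) (z : Fin d → ℂ) :
    lEval f z = Finsupp.sum f.coeff fun k c => (c : ℂ) * cPow z k := rfl

lemma torus_ne_zero {ω : Fin d → ℂ} (hω : ω ∈ torus d) (i : Fin d) : ω i ≠ 0 := by
  intro h
  have h1 := (hω : ∀ i, ‖ω i‖ = 1) i
  rw [h] at h1
  simp at h1

lemma cPow_add {ω : Fin d → ℂ} (hω : ∀ i, ω i ≠ 0) (a b : Fin d → ℤ) :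
    cPow ω (a + b) = cPow ω a * cPow ω b := by
  rw [cPow_def, cPow_def, cPow_def, ← Finset.prod_mul_distrib]
  refine Finset.prod_congr rfl fun i _ => ?_
  have h : (a + b) i = a i + b i := rfl
  rw [h, zpow_add₀ (hω i)]

lemma cPow_neg_arg (ω : Fin d → ℂ) (a : Fin d → ℤ) : cPow ω (-a) = (cPow ω a)⁻¹ := by
  rw [cPow_def, cPow_def, ← Finset.prod_inv_distrib]
  refine Finset.prod_congr rfl fun i _ => ?_
  have h : (-a) i = -(a i) := rfl
  rw [h, zpow_neg]

lemma cPow_mul_base (ω ψ : Fin d → ℂ) (a : Fin d → ℤ) :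
    cPow (ω * ψ) a = cPow ω a * cPow ψ a := by
  rw [cPow_def, cPow_def, cPow_def, ← Finset.prod_mul_distrib]
  refine Finset.prod_congr rfl fun i _ => ?_
  have h : (ω * ψ) i = ω i * ψ i := rfl
  rw [h, mul_zpow]

lemma cPow_inv_base (ω : Fin d → ℂ) (a : Fin d → ℤ) : cPow ω⁻¹ a = (cPow ω a)⁻¹ := by
  rw [cPow_def, cPow_def, ← Finset.prod_inv_distrib]
  refine Finset.prod_congr rfl fun i _ => ?_
  have h : (ω⁻¹) i = (ω i)⁻¹ := rfl
  rw [h, inv_zpow]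

lemma one_mem_omegaGamma (Γ : AddSubgroup (Fin d → ℤ)) : (1 : Fin d → ℂ) ∈ omegaGamma Γ := by
  constructor
  · show ∀ i, ‖(1 : Fin d → ℂ) i‖ = 1
    intro i
    simp [Pi.one_apply]
  · intro m _
    rw [cPow_def]
    simp [Pi.one_apply, one_zpow]

lemma mul_mem_omegaGamma {Γ : AddSubgroup (Fin d → ℤ)} {ω ψ : Fin d → ℂ}
    (hω : ω ∈ omegaGamma Γ) (hψ : ψ ∈ omegaGamma Γ) : ω * ψ ∈ omegaGamma Γ := by
  refine ⟨show ∀ i, ‖(ω * ψ) i‖ = 1 from fun i => ?_, fun m hm => ?_⟩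
  · rw [Pi.mul_apply, norm_mul, (hω.1 : ∀ i, ‖ω i‖ = 1) i, (hψ.1 : ∀ i, ‖ψ i‖ = 1) i, one_mul]
  · rw [cPow_mul_base, hω.2 m hm, hψ.2 m hm, one_mul]

lemma inv_mem_omegaGamma {Γ : AddSubgroup (Fin d → ℤ)} {ω : Fin d → ℂ}
    (hω : ω ∈ omegaGamma Γ) : ω⁻¹ ∈ omegaGamma Γ := by
  refine ⟨show ∀ i, ‖ω⁻¹ i‖ = 1 from fun i => ?_, fun m hm => ?_⟩
  · rw [Pi.inv_apply, norm_inv, (hω.1 : ∀ i, ‖ω i‖ = 1) i, inv_one]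
  · rw [cPow_inv_base, hω.2 m hm, inv_one]

lemma exists_char (Γ : AddSubgroup (Fin d → ℤ)) {m : Fin d → ℤ} (hm : m ∉ Γ) :
    ∃ ψ ∈ omegaGamma Γ, cPow ψ m ≠ 1 := by
  classical
  have hq : (QuotientAddGroup.mk m : (Fin d → ℤ) ⧸ Γ) ≠ 0 := by
    simpa [QuotientAddGroup.eq_zero_iff] using hm
  obtain ⟨c, hc⟩ := CharacterModule.exists_character_apply_ne_zero_of_ne_zero hq
  set χ : (Fin d → ℤ) →+ AddCircle (1 : ℚ) :=
    (AddMonoidHomClass.toAddMonoidHom c).comp (QuotientAddGroup.mk' Γ) with hχdef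
  have hχm : χ m ≠ 0 := hc
  have hχΓ : ∀ g ∈ Γ, χ g = 0 := by
    intro g hg
    have h0 : ((QuotientAddGroup.mk' Γ) g) = 0 := (QuotientAddGroup.eq_zero_iff g).mpr hg
    show (AddMonoidHomClass.toAddMonoidHom c) ((QuotientAddGroup.mk' Γ) g) = 0
    rw [h0, map_zero]
  choose t ht using fun i : Fin d => QuotientAddGroup.mk_surjective (χ (Pi.single i 1))
  set ψ : Fin d → ℂ := fun i => Complex.exp (2 * Real.pi * Complex.I * ((t i : ℝ) : ℂ)) with hψdef
  set ρ : ℚ →+ AddCircle (1 : ℚ) := QuotientAddGroup.mk' (AddSubgroup.zmultiples (1:ℚ)) with hρdef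
  have hρapp : ∀ x : ℚ, ρ x = (x : AddCircle (1:ℚ)) := fun x => rfl
  have key : ∀ a : Fin d → ℤ,
      cPow ψ a = Complex.exp (2 * Real.pi * Complex.I * (((∑ i, a i • t i : ℚ) : ℝ) : ℂ)) ∧
      (((∑ i, a i • t i : ℚ) : AddCircle (1:ℚ)) = χ a) := by
    intro a
    constructor
    · rw [cPow_def]
      have h1 : ∀ i : Fin d, ψ i ^ (a i)
          = Complex.exp ((a i : ℂ) * (2 * Real.pi * Complex.I * ((t i : ℝ) : ℂ))) := by
        intro i
        rw [hψdef]
        rw [Complex.exp_int_mul]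
      simp only [h1]
      rw [← Complex.exp_sum]
      congr 1
      push_cast [zsmul_eq_mul]
      simp only [Finset.mul_sum, Finset.sum_mul]
      exact Finset.sum_congr rfl fun i _ => by ring
    · have h2 : ∑ i, a i • Pi.single i (1 : ℤ) = a := by
        rw [show (∑ i, a i • Pi.single i (1 : ℤ)) = ∑ i, Pi.single i (a i) from
          Finset.sum_congr rfl fun i _ => by
            ext j
            simp [Pi.single_apply, mul_comm]]
        exact Finset.univ_sum_single a
      rw [← hρapp, map_sum]
      have h3 : ∀ i : Fin d, ρ (a i • t i) = a i • χ (Pi.single i 1) := by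
        intro i
        rw [map_zsmul, hρapp, ht i]
      rw [Finset.sum_congr rfl fun i _ => h3 i]
      have h4 : ∑ i, a i • χ (Pi.single i 1) = χ (∑ i, a i • Pi.single i (1:ℤ)) := by
        rw [map_sum]
        exact Finset.sum_congr rfl fun i _ => (map_zsmul χ _ _).symm
      rw [h4, h2]
  have hψtorus : ψ ∈ torus d := by
    show ∀ i, ‖ψ i‖ = 1
    intro i
    have h : (2 * Real.pi * Complex.I * ((t i : ℝ) : ℂ))
        = (((2 * Real.pi * (t i : ℝ) : ℝ)) : ℂ) * Complex.I := by
      push_cast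
      ring
    rw [hψdef]
    show ‖Complex.exp (2 * Real.pi * Complex.I * ((t i : ℝ) : ℂ))‖ = 1
    rw [h, Complex.norm_exp_ofReal_mul_I]
  have hψΓ : ψ ∈ omegaGamma Γ := by
    refine ⟨hψtorus, fun g hg => ?_⟩
    obtain ⟨h1, h2⟩ := key g
    rw [hχΓ g hg] at h2
    obtain ⟨z, hz⟩ := (AddCircle.coe_eq_zero_iff _).mp h2
    have hzq : (∑ i, g i • t i : ℚ) = (z : ℚ) := by
      rw [← hz]
      simp
    rw [h1, hzq]
    have h3 : (2 * Real.pi * Complex.I * (((z : ℚ) : ℝ) : ℂ))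
        = (z : ℂ) * (2 * Real.pi * Complex.I) := by
      push_cast
      ring
    rw [h3, Complex.exp_int_mul_two_pi_mul_I]
  refine ⟨ψ, hψΓ, ?_⟩
  obtain ⟨h1, h2⟩ := key m
  intro hone
  rw [h1, Complex.exp_eq_one_iff] at hone
  obtain ⟨z, hz⟩ := hone
  have hz' : (2 * Real.pi * Complex.I) * (((∑ i, m i • t i : ℚ) : ℝ) : ℂ)
      = (2 * Real.pi * Complex.I) * (z : ℂ) := by
    rw [hz]
    ring
  have hs : (((∑ i, m i • t i : ℚ) : ℝ) : ℂ) = (z : ℂ) :=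
    mul_left_cancel₀ Complex.two_pi_I_ne_zero hz'
  have hsq : (∑ i, m i • t i : ℚ) = (z : ℚ) := by exact_mod_cast hs
  apply hχm
  rw [← h2, hsq]
  exact (AddCircle.coe_eq_zero_iff _).mpr ⟨z, by simp⟩

lemma omegaGamma_finite (Γ : AddSubgroup (Fin d → ℤ)) (hΓ : Γ.FiniteIndex) :
    (omegaGamma Γ).Finite := by
  classical
  haveI := hΓ
  haveI : Finite ((Fin d → ℤ) ⧸ Γ) := Γ.finite_quotient_of_finiteIndex
  set N := Nat.card ((Fin d → ℤ) ⧸ Γ) with hN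
  have hNpos : 0 < N := Nat.card_pos
  have hsub : omegaGamma Γ ⊆ Set.pi Set.univ (fun _ : Fin d => {z : ℂ | z ^ N = 1}) := by
    intro ω hω i _
    have hmem : (N • Pi.single i (1:ℤ)) ∈ Γ := by
      have h0 : ((N • Pi.single i (1:ℤ) : Fin d → ℤ) : (Fin d → ℤ) ⧸ Γ) = 0 := by
        rw [show ((N • Pi.single i (1:ℤ) : Fin d → ℤ) : (Fin d → ℤ) ⧸ Γ)
            = N • ((Pi.single i (1:ℤ) : Fin d → ℤ) : (Fin d → ℤ) ⧸ Γ) from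
          map_nsmul (QuotientAddGroup.mk' Γ) _ _]
        exact card_nsmul_eq_zero'
      exact (QuotientAddGroup.eq_zero_iff _).mp h0
    have h1 := hω.2 _ hmem
    have h2 : cPow ω (N • Pi.single i (1:ℤ)) = ω i ^ (N : ℤ) := by
      rw [cPow_def]
      rw [Finset.prod_eq_single i]
      · congr 1
        simp [Pi.smul_apply, Pi.single_eq_same]
      · intro j _ hj
        have h0 : ((N • Pi.single i (1:ℤ) : Fin d → ℤ)) j = (0:ℤ) := by
          simp [Pi.smul_apply, Pi.single_apply, hj]
        rw [h0, zpow_zero]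
      · intro h
        exact absurd (Finset.mem_univ i) h
    rw [h2, zpow_natCast] at h1
    exact h1
  refine Set.Finite.subset (Set.Finite.pi fun i => ?_) hsub
  have hroots : {z : ℂ | z ^ N = 1} ⊆ ((Polynomial.nthRoots N (1:ℂ)).toFinset : Set ℂ) := by
    intro z hz
    simp only [Finset.coe_sort_coe, Multiset.mem_toFinset, Finset.mem_coe]
    exact (Polynomial.mem_nthRoots hNpos).mpr hz
  exact Set.Finite.subset ((Polynomial.nthRoots N (1:ℂ)).toFinset.finite_toSet) hroots

/-- `V_Γ(f)` as a submodule. -/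
def VSub (f : LP d) (Γ : AddSubgroup (Fin d → ℤ)) : Submodule ℝ ((Fin d → ℤ) → ℝ) where
  carrier := VGamma f Γ
  add_mem' := by
    rintro a b ⟨ha1, ha2⟩ ⟨hb1, hb2⟩
    refine ⟨fun n m hm => by simp only [Pi.add_apply, ha1 n m hm, hb1 n m hm], fun n => ?_⟩
    have h1 := ha2 n
    have h2 := hb2 n
    rw [Finsupp.sum] at h1 h2 ⊢
    simp only [Pi.add_apply, mul_add, Finset.sum_add_distrib]
    rw [h1, h2, add_zero]
  zero_mem' := by
    refine ⟨fun n m hm => rfl, fun n => ?_⟩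
    rw [Finsupp.sum]
    simp
  smul_mem' := by
    rintro r a ⟨ha1, ha2⟩
    refine ⟨fun n m hm => by simp only [Pi.smul_apply, ha1 n m hm], fun n => ?_⟩
    have h1 := ha2 n
    rw [Finsupp.sum] at h1 ⊢
    simp only [Pi.smul_apply, smul_eq_mul]
    calc ∑ k ∈ f.coeff.support, ((f.coeff k : ℤ) : ℝ) * (r * a (n + k))
        = r * ∑ k ∈ f.coeff.support, ((f.coeff k : ℤ) : ℝ) * a (n + k) := by
          rw [Finset.mul_sum]
          exact Finset.sum_congr rfl fun k _ => by ring
      _ = 0 := by rw [h1, mul_zero]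

lemma re_im_mem_VGamma {f : LP d} {Γ : AddSubgroup (Fin d → ℤ)} {ω : Fin d → ℂ}
    (hU : ω ∈ uVar f) (hΩ : ω ∈ omegaGamma Γ) :
    (fun n => (cPow ω n).re) ∈ VGamma f Γ ∧ (fun n => (cPow ω n).im) ∈ VGamma f Γ := by
  have hne : ∀ i, ω i ≠ 0 := torus_ne_zero hΩ.1
  have hper : ∀ (n m : Fin d → ℤ), m ∈ Γ → cPow ω (n + m) = cPow ω n := by
    intro n m hm
    rw [cPow_add hne, hΩ.2 m hm, mul_one]
  have hkey : ∀ n : Fin d → ℤ, ∑ k ∈ f.coeff.support, ((f.coeff k : ℤ) : ℂ) * cPow ω (n + k) = 0 := by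
    intro n
    calc ∑ k ∈ f.coeff.support, ((f.coeff k : ℤ) : ℂ) * cPow ω (n + k)
        = cPow ω n * ∑ k ∈ f.coeff.support, ((f.coeff k : ℤ) : ℂ) * cPow ω k := by
          rw [Finset.mul_sum]
          refine Finset.sum_congr rfl fun k _ => ?_
          rw [cPow_add hne n k]
          ring
      _ = cPow ω n * lEval f ω := by rw [lEval_eq, Finsupp.sum]
      _ = 0 := by rw [hU.2, mul_zero]
  constructor
  · refine ⟨fun n m hm => by simp only [hper n m hm], fun n => ?_⟩
    rw [Finsupp.sum]
    have h : ∀ k : Fin d → ℤ, ((f.coeff k : ℤ) : ℝ) * (cPow ω (n+k)).re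
        = (((f.coeff k : ℤ) : ℂ) * cPow ω (n+k)).re := by
      intro k
      rw [show ((f.coeff k : ℤ) : ℂ) = (((f.coeff k : ℤ) : ℝ) : ℂ) by push_cast; rfl, Complex.re_ofReal_mul]
    simp only [h]
    rw [← Complex.re_sum, hkey n, Complex.zero_re]
  · refine ⟨fun n m hm => by simp only [hper n m hm], fun n => ?_⟩
    rw [Finsupp.sum]
    have h : ∀ k : Fin d → ℤ, ((f.coeff k : ℤ) : ℝ) * (cPow ω (n+k)).im
        = (((f.coeff k : ℤ) : ℂ) * cPow ω (n+k)).im := by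
      intro k
      rw [show ((f.coeff k : ℤ) : ℂ) = (((f.coeff k : ℤ) : ℝ) : ℂ) by push_cast; rfl, Complex.im_ofReal_mul]
    simp only [h]
    rw [← Complex.im_sum, hkey n, Complex.zero_im]

lemma gen_subset_VGamma (f : LP d) (Γ : AddSubgroup (Fin d → ℤ)) :
    (⋃ ω ∈ uVar f ∩ omegaGamma Γ,
      {(fun n => (cPow ω n).re), (fun n => (cPow ω n).im)} : Set ((Fin d → ℤ) → ℝ))
      ⊆ VGamma f Γ := by
  intro v hv
  rw [Set.mem_iUnion₂] at hv
  obtain ⟨ω, hω, hv⟩ := hv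
  rcases Set.mem_insert_iff.mp hv with h | h
  · subst h
    exact (re_im_mem_VGamma hω.1 hω.2).1
  · rw [Set.mem_singleton_iff] at h
    subst h
    exact (re_im_mem_VGamma hω.1 hω.2).2

lemma mem_span_of_mem_VGamma (f : LP d) (Γ : AddSubgroup (Fin d → ℤ)) (hΓ : Γ.FiniteIndex)
    {w : (Fin d → ℤ) → ℝ} (hw : w ∈ VGamma f Γ) :
    w ∈ Submodule.span ℝ (⋃ ω ∈ uVar f ∩ omegaGamma Γ,
      ({(fun n => (cPow ω n).re), (fun n => (cPow ω n).im)} : Set ((Fin d → ℤ) → ℝ))) := by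
  classical
  haveI := hΓ
  haveI : Finite ((Fin d → ℤ) ⧸ Γ) := Γ.finite_quotient_of_finiteIndex
  haveI : Fintype ((Fin d → ℤ) ⧸ Γ) := Fintype.ofFinite _
  obtain ⟨hwper, hweq⟩ := hw
  set S : ((Fin d → ℤ) ⧸ Γ) → (Fin d → ℤ) := Quotient.out with hSdef
  have hmkS : ∀ q : (Fin d → ℤ) ⧸ Γ, (QuotientAddGroup.mk (S q) : (Fin d → ℤ) ⧸ Γ) = q :=
    fun q => QuotientAddGroup.out_eq' q
  -- congruence for Γ-periodic complex functions
  have hcong : ∀ (g : (Fin d → ℤ) → ℂ), (∀ n m, m ∈ Γ → g (n + m) = g n) →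
      ∀ {a b : Fin d → ℤ}, (QuotientAddGroup.mk a : (Fin d → ℤ) ⧸ Γ) = QuotientAddGroup.mk b →
      g a = g b := by
    intro g hg a b hab
    have hmem : -a + b ∈ Γ := QuotientAddGroup.eq.mp hab
    have h := hg a (-a + b) hmem
    rw [show a + (-a + b) = b by abel] at h
    exact h.symm
  have hwcong : ∀ {a b : Fin d → ℤ},
      (QuotientAddGroup.mk a : (Fin d → ℤ) ⧸ Γ) = QuotientAddGroup.mk b → w a = w b := by
    intro a b hab
    have hmem : -a + b ∈ Γ := QuotientAddGroup.eq.mp hab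
    have h := hwper a (-a + b) hmem
    rw [show a + (-a + b) = b by abel] at h
    exact h.symm
  have hshift : ∀ (g : (Fin d → ℤ) → ℂ), (∀ n m, m ∈ Γ → g (n + m) = g n) →
      ∀ k : Fin d → ℤ, ∑ q, g (S q + k) = ∑ q, g (S q) := by
    intro g hg k
    refine Fintype.sum_equiv (Equiv.addRight (QuotientAddGroup.mk k : (Fin d → ℤ) ⧸ Γ)) _ _
      fun q => ?_
    simp only [Equiv.coe_addRight]
    have h1 : (QuotientAddGroup.mk (S q + k) : (Fin d → ℤ) ⧸ Γ)
        = q + QuotientAddGroup.mk k := by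
      rw [QuotientAddGroup.mk_add, hmkS]
    have h2 : (QuotientAddGroup.mk (S (q + QuotientAddGroup.mk k)) : (Fin d → ℤ) ⧸ Γ)
        = q + QuotientAddGroup.mk k := hmkS _
    exact hcong g hg (h1.trans h2.symm)
  -- the finite set of characters
  have hfin := omegaGamma_finite Γ hΓ
  set O : Finset (Fin d → ℂ) := hfin.toFinset with hOdef
  have hOmem : ∀ {ω : Fin d → ℂ}, ω ∈ O ↔ ω ∈ omegaGamma Γ := fun {ω} => hfin.mem_toFinset
  have hOne : (1 : Fin d → ℂ) ∈ O := hOmem.mpr (one_mem_omegaGamma Γ)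
  have hcard : ((O.card : ℂ)) ≠ 0 := by
    have h : 0 < O.card := Finset.card_pos.mpr ⟨_, hOne⟩
    exact_mod_cast h.ne'
  -- orthogonality
  have horth : ∀ m : Fin d → ℤ, ∑ ω ∈ O, cPow ω m = if m ∈ Γ then (O.card : ℂ) else 0 := by
    intro m
    by_cases hm : m ∈ Γ
    · rw [if_pos hm, Finset.sum_congr rfl fun ω hω => (hOmem.mp hω).2 m hm]
      simp
    · rw [if_neg hm]
      obtain ⟨ψ, hψ, hψm⟩ := exists_char Γ hm
      have hψne : ∀ i, ψ i ≠ 0 := torus_ne_zero hψ.1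
      have hre : ∑ ω ∈ O, cPow ω m = ∑ ω ∈ O, cPow (ψ * ω) m := by
        refine Finset.sum_nbij' (fun ω => ψ⁻¹ * ω) (fun ω => ψ * ω)
          (fun ω hω => hOmem.mpr (mul_mem_omegaGamma (inv_mem_omegaGamma hψ) (hOmem.mp hω)))
          (fun ω hω => hOmem.mpr (mul_mem_omegaGamma hψ (hOmem.mp hω)))
          (fun ω _ => funext fun i => mul_inv_cancel_left₀ (hψne i) (ω i))
          (fun ω _ => funext fun i => inv_mul_cancel_left₀ (hψne i) (ω i))
          (fun ω _ => ?_)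
        congr 1
        exact (funext fun i => (mul_inv_cancel_left₀ (hψne i) (ω i)).symm)
      have hfactor : ∑ ω ∈ O, cPow (ψ * ω) m = cPow ψ m * ∑ ω ∈ O, cPow ω m := by
        rw [Finset.mul_sum]
        exact Finset.sum_congr rfl fun ω _ => cPow_mul_base ψ ω m
      have hzero : (cPow ψ m - 1) * ∑ ω ∈ O, cPow ω m = 0 := by
        rw [sub_mul, one_mul, ← hfactor, ← hre, sub_self]
      rcases mul_eq_zero.mp hzero with h | h
      · exact absurd (sub_eq_zero.mp h) hψm
      · exact h
  -- the Fourier coefficients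
  set what : (Fin d → ℂ) → ℂ := fun ω => ∑ q, (w (S q) : ℂ) * cPow ω (-(S q)) with hwhatdef
  -- inversion formula
  have hinv : ∀ n : Fin d → ℤ, (w n : ℂ) = (O.card : ℂ)⁻¹ * ∑ ω ∈ O, what ω * cPow ω n := by
    intro n
    have step1 : ∑ ω ∈ O, what ω * cPow ω n
        = ∑ ω ∈ O, ∑ q, (w (S q) : ℂ) * cPow ω (n - S q) := by
      refine Finset.sum_congr rfl fun ω hω => ?_
      rw [hwhatdef, Finset.sum_mul]
      refine Finset.sum_congr rfl fun q _ => ?_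
      rw [mul_assoc]
      congr 1
      rw [← cPow_add (torus_ne_zero (hOmem.mp hω).1)]
      congr 1
      abel
    have step2 : ∀ q : (Fin d → ℤ) ⧸ Γ, ∑ ω ∈ O, (w (S q) : ℂ) * cPow ω (n - S q)
        = (w (S q) : ℂ) * (if n - S q ∈ Γ then (O.card : ℂ) else 0) := by
      intro q
      rw [← Finset.mul_sum, horth]
    have step3 : ∑ q : (Fin d → ℤ) ⧸ Γ,
        (w (S q) : ℂ) * (if n - S q ∈ Γ then (O.card : ℂ) else 0) = (w n : ℂ) * O.card := by
      rw [Finset.sum_eq_single (QuotientAddGroup.mk n : (Fin d → ℤ) ⧸ Γ)]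
      · have hmem : n - S (QuotientAddGroup.mk n : (Fin d → ℤ) ⧸ Γ) ∈ Γ := by
          have h1 := QuotientAddGroup.eq.mp (hmkS (QuotientAddGroup.mk n))
          rwa [neg_add_eq_sub] at h1
        rw [if_pos hmem, hwcong (hmkS (QuotientAddGroup.mk n))]
      · intro q _ hq
        have hnot : n - S q ∉ Γ := by
          intro hmem
          apply hq
          have h1 : (QuotientAddGroup.mk (S q) : (Fin d → ℤ) ⧸ Γ) = QuotientAddGroup.mk n := by
            rw [QuotientAddGroup.eq, neg_add_eq_sub]
            exact hmem
          rw [← hmkS q, h1]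
        rw [if_neg hnot, mul_zero]
      · intro h
        exact absurd (Finset.mem_univ _) h
    rw [step1, Finset.sum_comm, Finset.sum_congr rfl fun q _ => step2 q, step3,
      mul_comm ((w n : ℂ)) ((O.card : ℂ)), ← mul_assoc, inv_mul_cancel₀ hcard, one_mul]
  -- vanishing of coefficients off the variety
  have hvanish : ∀ ω ∈ O, lEval f ω * what ω = 0 := by
    intro ω hω
    have hne : ∀ i, ω i ≠ 0 := torus_ne_zero (hOmem.mp hω).1
    have hω1 : ∀ m ∈ Γ, cPow ω m = 1 := (hOmem.mp hω).2
    set g : (Fin d → ℤ) → ℂ := fun n => (w n : ℂ) * cPow ω (-n) with hgdef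
    have hgper : ∀ n m, m ∈ Γ → g (n + m) = g n := by
      intro n m hm
      simp only [hgdef]
      rw [hwper n m hm, neg_add, cPow_add hne,
        show cPow ω (-m) = 1 by rw [cPow_neg_arg, hω1 m hm, inv_one], mul_one]
    have hgsum : ∀ k : Fin d → ℤ, ∑ q, g (S q + k) = what ω := by
      intro k
      rw [hshift g hgper k]
    have hmain : (0:ℂ) = ∑ q : (Fin d → ℤ) ⧸ Γ,
        (((Finsupp.sum f.coeff fun k c => (c : ℝ) * w (S q + k) : ℝ)) : ℂ) * cPow ω (-(S q)) := by
      symm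
      refine Finset.sum_eq_zero fun q _ => ?_
      rw [hweq (S q)]
      simp
    have hexpand : ∑ q : (Fin d → ℤ) ⧸ Γ,
        (((Finsupp.sum f.coeff fun k c => (c : ℝ) * w (S q + k) : ℝ)) : ℂ) * cPow ω (-(S q))
        = ∑ k ∈ f.coeff.support, (f.coeff k : ℂ) * (what ω * cPow ω k) := by
      have h1 : ∀ q : (Fin d → ℤ) ⧸ Γ,
          (((Finsupp.sum f.coeff fun k c => (c : ℝ) * w (S q + k) : ℝ)) : ℂ) * cPow ω (-(S q))
          = ∑ k ∈ f.coeff.support, (f.coeff k : ℂ) * (g (S q + k) * cPow ω k) := by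
        intro q
        rw [Finsupp.sum, Complex.ofReal_sum, Finset.sum_mul]
        refine Finset.sum_congr rfl fun k _ => ?_
        simp only [hgdef]
        have h2 : cPow ω (-(S q)) = cPow ω (-(S q + k)) * cPow ω k := by
          rw [← cPow_add hne]
          congr 1
          abel
        rw [h2]
        push_cast
        ring
      rw [Finset.sum_congr rfl fun q _ => h1 q, Finset.sum_comm]
      refine Finset.sum_congr rfl fun k _ => ?_
      rw [← Finset.mul_sum, ← Finset.sum_mul, hgsum k]
    have hfin2 : (0:ℂ) = what ω * ∑ k ∈ f.coeff.support, (f.coeff k : ℂ) * cPow ω k := by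
      rw [hmain, hexpand, Finset.mul_sum]
      exact Finset.sum_congr rfl fun k _ => by ring
    rw [lEval_eq, Finsupp.sum, mul_comm]
    exact hfin2.symm
  -- restrict to the vanishing set
  set O' : Finset (Fin d → ℂ) := O.filter (fun ω => lEval f ω = 0) with hO'def
  have hfull : ∀ n : Fin d → ℤ,
      (w n : ℂ) = (O.card : ℂ)⁻¹ * ∑ ω ∈ O', what ω * cPow ω n := by
    intro n
    rw [hinv n]
    congr 1
    symm
    refine Finset.sum_filter_of_ne fun ω hω hne => ?_
    by_contra hfne
    apply hne
    rcases mul_eq_zero.mp (hvanish ω hω) with h | h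
    · exact absurd h hfne
    · rw [h, zero_mul]
  have hformula : w = ∑ ω ∈ O', (((O.card : ℝ)⁻¹ * (what ω).re) • (fun n => (cPow ω n).re)
      + (-((O.card : ℝ)⁻¹ * (what ω).im)) • (fun n => (cPow ω n).im)) := by
    funext n
    have h1 : w n = ((O.card : ℂ)⁻¹ * ∑ ω ∈ O', what ω * cPow ω n).re := by
      rw [← hfull n, Complex.ofReal_re]
    have h2 : ((O.card : ℂ))⁻¹ = (((O.card : ℝ)⁻¹ : ℝ) : ℂ) := by
      push_cast
      rfl
    rw [h1, Finset.sum_apply]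
    simp only [Pi.add_apply, Pi.smul_apply, smul_eq_mul]
    rw [h2, Complex.re_ofReal_mul, Complex.re_sum, Finset.mul_sum]
    refine Finset.sum_congr rfl fun ω _ => ?_
    rw [Complex.mul_re]
    ring
  rw [hformula]
  refine Submodule.sum_mem _ fun ω hω => ?_
  rw [hO'def, Finset.mem_filter] at hω
  have hΩ : ω ∈ omegaGamma Γ := hOmem.mp hω.1
  have hU : ω ∈ uVar f := ⟨hΩ.1, hω.2⟩
  have hg1 : (fun n => (cPow ω n).re) ∈ (⋃ ω ∈ uVar f ∩ omegaGamma Γ,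
      ({(fun n => (cPow ω n).re), (fun n => (cPow ω n).im)} : Set ((Fin d → ℤ) → ℝ))) :=
    Set.mem_iUnion₂.mpr ⟨ω, ⟨hU, hΩ⟩, Set.mem_insert _ _⟩
  have hg2 : (fun n => (cPow ω n).im) ∈ (⋃ ω ∈ uVar f ∩ omegaGamma Γ,
      ({(fun n => (cPow ω n).re), (fun n => (cPow ω n).im)} : Set ((Fin d → ℤ) → ℝ))) :=
    Set.mem_iUnion₂.mpr ⟨ω, ⟨hU, hΩ⟩, Set.mem_insert_iff.mpr (Or.inr rfl)⟩
  exact Submodule.add_mem _ (Submodule.smul_mem _ _ (Submodule.subset_span hg1))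
    (Submodule.smul_mem _ _ (Submodule.subset_span hg2))

/-- The reduction homomorphism `ℝ →+ 𝕋`. -/
def phiR : ℝ →+ TT := QuotientAddGroup.mk' (AddSubgroup.zmultiples (1:ℝ))

lemma phiR_apply (r : ℝ) : phiR r = (r : TT) := rfl

lemma eta_mem_fixSet {f : LP d} {Γ : AddSubgroup (Fin d → ℤ)} {w : (Fin d → ℤ) → ℝ}
    (hw : w ∈ VGamma f Γ) : etaMap w ∈ fixSet f Γ := by
  refine ⟨fun n => ?_, fun n m hm => ?_⟩
  · have h : (Finsupp.sum f.coeff fun m c => c • (etaMap w) (n + m))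
        = phiR (Finsupp.sum f.coeff fun k c => (c : ℝ) * w (n + k)) := by
      rw [Finsupp.sum, Finsupp.sum, map_sum]
      refine Finset.sum_congr rfl fun k _ => ?_
      rw [show ((f.coeff k : ℤ) : ℝ) * w (n + k) = (f.coeff k : ℤ) • w (n + k) from (zsmul_eq_mul _ _).symm,
        map_zsmul]
      rfl
    rw [h, hw.2 n, map_zero]
  · show ((w (n + m) : ℝ) : TT) = ((w n : ℝ) : TT)
    rw [hw.1 n m hm]

lemma zero_mem_fixSet (f : LP d) (Γ : AddSubgroup (Fin d → ℤ)) :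
    (0 : (Fin d → ℤ) → TT) ∈ fixSet f Γ := by
  refine ⟨fun n => ?_, fun n m hm => rfl⟩
  rw [Finsupp.sum]
  refine Finset.sum_eq_zero fun k _ => ?_
  simp

lemma sub_mem_fixSet {f : LP d} {Γ : AddSubgroup (Fin d → ℤ)} {x y : (Fin d → ℤ) → TT}
    (hx : x ∈ fixSet f Γ) (hy : y ∈ fixSet f Γ) : x - y ∈ fixSet f Γ := by
  refine ⟨fun n => ?_, fun n m hm => by simp only [Pi.sub_apply, hx.2 n m hm, hy.2 n m hm]⟩
  have h1 := hx.1 n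
  have h2 := hy.1 n
  rw [Finsupp.sum] at h1 h2 ⊢
  simp only [Pi.sub_apply, smul_sub, Finset.sum_sub_distrib]
  rw [h1, h2, sub_zero]

lemma exists_lift (y : TT) : ∃ r : ℝ, (r : TT) = y ∧ |r| = ‖y‖ := by
  obtain ⟨r0, hr0⟩ := QuotientAddGroup.mk_surjective y
  have hzero : (((round r0 : ℤ) : ℝ) : TT) = 0 :=
    (AddCircle.coe_eq_zero_iff _).mpr ⟨round r0, by simp⟩
  have hcoe : ((r0 - ((round r0 : ℤ) : ℝ) : ℝ) : TT) = y := by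
    rw [show ((r0 - ((round r0 : ℤ) : ℝ) : ℝ) : TT)
        = ((r0 : ℝ) : TT) - (((round r0 : ℤ) : ℝ) : TT) from map_sub phiR _ _, hzero, sub_zero]
    exact hr0
  refine ⟨r0 - round r0, hcoe, ?_⟩
  rw [← hcoe, AddCircle.norm_eq]
  simp [round_sub_intCast]

lemma exists_eps (f : LP d) (Γ : AddSubgroup (Fin d → ℤ)) :
    ∃ ε : ℝ, 0 < ε ∧ ∀ x ∈ fixSet f Γ, (∀ n, ‖x n‖ < ε) → x ∈ etaMap '' VGamma f Γ := by
  classical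
  set C : ℝ := ∑ k ∈ f.coeff.support, |((f.coeff k : ℤ) : ℝ)| with hCdef
  have hC : 0 ≤ C := Finset.sum_nonneg fun k _ => abs_nonneg _
  have hCpos : (0:ℝ) < 2 * (C + 1) := by linarith
  refine ⟨1 / (2 * (C + 1)), by positivity, ?_⟩
  intro x hx hsmall
  choose w hw1 hw2 using fun n => exists_lift (x n)
  have hwb : ∀ n, |w n| < 1 / (2 * (C + 1)) := fun n => (hw2 n) ▸ hsmall n
  have hint : ∀ r : ℝ, (r : TT) = 0 → ∃ z : ℤ, r = z := by
    intro r hr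
    obtain ⟨z, hz⟩ := (AddCircle.coe_eq_zero_iff _).mp hr
    exact ⟨z, by rw [← hz]; simp⟩
  have hper : ∀ (n m : Fin d → ℤ), m ∈ Γ → w (n + m) = w n := by
    intro n m hm
    have hcoe : ((w (n+m) - w n : ℝ) : TT) = 0 := by
      rw [show ((w (n+m) - w n : ℝ) : TT) = ((w (n+m) : ℝ) : TT) - ((w n : ℝ) : TT) from
        map_sub phiR _ _, hw1, hw1, hx.2 n m hm, sub_self]
    obtain ⟨z, hz⟩ := hint _ hcoe
    have hb : |w (n+m) - w n| < 1 := by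
      have h1 : |w (n+m) - w n| ≤ |w (n+m)| + |w n| := by
        rw [sub_eq_add_neg]
        exact (abs_add_le _ _).trans (by rw [abs_neg])
      have h2 := hwb (n+m)
      have h3 := hwb n
      have h4 : 1 / (2 * (C + 1)) + 1 / (2 * (C + 1)) ≤ 1 := by
        rw [← add_div]
        rw [div_le_one hCpos]
        linarith
      linarith
    have hz0 : z = 0 := by
      have hb2 : |(z : ℝ)| < 1 := hz ▸ hb
      have h5 : |z| < 1 := by exact_mod_cast hb2
      exact Int.abs_lt_one_iff.mp h5
    have : w (n+m) - w n = 0 := by rw [hz, hz0, Int.cast_zero]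
    linarith
  have heq : ∀ n, (Finsupp.sum f.coeff fun k c => (c : ℝ) * w (n + k)) = 0 := by
    intro n
    set s := (Finsupp.sum f.coeff fun k c => (c : ℝ) * w (n + k)) with hsdef
    have hcoe : (s : TT) = 0 := by
      rw [hsdef, Finsupp.sum, show ((∑ k ∈ f.coeff.support, ((f.coeff k : ℤ) : ℝ) * w (n+k) : ℝ) : TT)
          = phiR (∑ k ∈ f.coeff.support, ((f.coeff k : ℤ) : ℝ) * w (n+k)) from rfl, map_sum]
      have h : ∀ k ∈ f.coeff.support, phiR (((f.coeff k : ℤ) : ℝ) * w (n+k)) = (f.coeff k : ℤ) • x (n + k) := by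
        intro k _
        rw [show ((f.coeff k : ℤ) : ℝ) * w (n+k) = (f.coeff k : ℤ) • w (n+k) from (zsmul_eq_mul _ _).symm,
          map_zsmul, phiR_apply, hw1]
      rw [Finset.sum_congr rfl h]
      have h2 := hx.1 n
      rw [Finsupp.sum] at h2
      exact h2
    obtain ⟨z, hz⟩ := hint _ hcoe
    have hsb : |s| < 1 := by
      rw [hsdef, Finsupp.sum]
      calc |∑ k ∈ f.coeff.support, ((f.coeff k : ℤ) : ℝ) * w (n+k)|
          ≤ ∑ k ∈ f.coeff.support, |((f.coeff k : ℤ) : ℝ) * w (n+k)| := Finset.abs_sum_le_sum_abs _ _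
        _ ≤ ∑ k ∈ f.coeff.support, |((f.coeff k : ℤ) : ℝ)| * (1 / (2 * (C + 1))) := by
            refine Finset.sum_le_sum fun k _ => ?_
            rw [abs_mul]
            exact mul_le_mul_of_nonneg_left (le_of_lt (hwb _)) (abs_nonneg _)
        _ = C * (1 / (2 * (C + 1))) := by rw [← Finset.sum_mul]
        _ < 1 := by
            rw [mul_one_div, div_lt_one hCpos]
            linarith
    have hz0 : z = 0 := by
      have hb2 : |(z : ℝ)| < 1 := hz ▸ hsb
      have h5 : |z| < 1 := by exact_mod_cast hb2
      exact Int.abs_lt_one_iff.mp h5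
    rw [hz, hz0, Int.cast_zero]
  refine ⟨w, ⟨hper, heq⟩, ?_⟩
  funext n
  exact hw1 n

lemma eta_image_eq (f : LP d) (Γ : AddSubgroup (Fin d → ℤ)) (hΓ : Γ.FiniteIndex) :
    etaMap '' VGamma f Γ = connectedComponentIn (fixSet f Γ) 0 := by
  classical
  haveI := hΓ
  haveI : Finite ((Fin d → ℤ) ⧸ Γ) := Γ.finite_quotient_of_finiteIndex
  haveI : Fintype ((Fin d → ℤ) ⧸ Γ) := Fintype.ofFinite _
  obtain ⟨ε, hε, hkey⟩ := exists_eps f Γ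
  have himg : etaMap '' VGamma f Γ ⊆ fixSet f Γ := by
    rintro _ ⟨v, hv, rfl⟩
    exact eta_mem_fixSet hv
  have hη0 : etaMap (0 : (Fin d → ℤ) → ℝ) = 0 := by
    funext n
    show ((0:ℝ) : TT) = 0
    exact map_zero phiR
  have h0img : (0 : (Fin d → ℤ) → TT) ∈ etaMap '' VGamma f Γ :=
    ⟨0, (VSub f Γ).zero_mem, hη0⟩
  have hcont : Continuous (etaMap : ((Fin d → ℤ) → ℝ) → ((Fin d → ℤ) → TT)) := by
    refine continuous_pi fun n => ?_
    exact (AddCircle.continuous_mk' (1:ℝ)).comp (continuous_apply n)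
  have hconn : IsPreconnected (etaMap '' VGamma f Γ) := by
    have hconv : Convex ℝ (VGamma f Γ) := (VSub f Γ).convex
    exact (hconv.isPreconnected).image _ hcont.continuousOn
  have hsub1 : etaMap '' VGamma f Γ ⊆ connectedComponentIn (fixSet f Γ) 0 :=
    hconn.subset_connectedComponentIn h0img himg
  -- additive closure of the image
  have himg_add : ∀ a ∈ etaMap '' VGamma f Γ, ∀ b ∈ etaMap '' VGamma f Γ,
      a + b ∈ etaMap '' VGamma f Γ := by
    rintro _ ⟨u, hu, rfl⟩ _ ⟨v, hv, rfl⟩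
    refine ⟨u + v, (VSub f Γ).add_mem hu hv, ?_⟩
    funext n
    show ((u n + v n : ℝ) : TT) = ((u n : ℝ) : TT) + ((v n : ℝ) : TT)
    exact map_add phiR _ _
  have himg_sub : ∀ a ∈ etaMap '' VGamma f Γ, ∀ b ∈ etaMap '' VGamma f Γ,
      a - b ∈ etaMap '' VGamma f Γ := by
    rintro _ ⟨u, hu, rfl⟩ _ ⟨v, hv, rfl⟩
    refine ⟨u - v, (VSub f Γ).sub_mem hu hv, ?_⟩
    funext n
    show ((u n - v n : ℝ) : TT) = ((u n : ℝ) : TT) - ((v n : ℝ) : TT)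
    exact map_sub phiR _ _
  -- basic neighborhoods
  set S : ((Fin d → ℤ) ⧸ Γ) → (Fin d → ℤ) := Quotient.out with hS
  have hmkS : ∀ q : ((Fin d → ℤ) ⧸ Γ), (QuotientAddGroup.mk (S q) : (Fin d → ℤ) ⧸ Γ) = q :=
    fun q => QuotientAddGroup.out_eq' q
  set U : ((Fin d → ℤ) → TT) → Set ((Fin d → ℤ) → TT) :=
    fun y => {x | ∀ q : ((Fin d → ℤ) ⧸ Γ), ‖x (S q) - y (S q)‖ < ε} with hU
  have hUopen : ∀ y, IsOpen (U y) := by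
    intro y
    have h : U y = ⋂ q : ((Fin d → ℤ) ⧸ Γ),
        {x : ((Fin d → ℤ) → TT) | ‖x (S q) - y (S q)‖ < ε} := by
      ext x
      simp only [hU, Set.mem_setOf_eq, Set.mem_iInter]
    rw [h]
    refine isOpen_iInter_of_finite fun q => ?_
    have hc : Continuous fun x : ((Fin d → ℤ) → TT) => ‖x (S q) - y (S q)‖ :=
      ((continuous_apply (S q)).sub continuous_const).norm
    exact isOpen_lt hc continuous_const
  have hUself : ∀ y, y ∈ U y := by
    intro y q
    simpa using hε
  have hUkey : ∀ y ∈ fixSet f Γ, ∀ x ∈ fixSet f Γ, x ∈ U y →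
      x - y ∈ etaMap '' VGamma f Γ := by
    intro y hy x hx hxU
    refine hkey _ (sub_mem_fixSet hx hy) ?_
    intro n
    have hsubper : ∀ (n' m : Fin d → ℤ), m ∈ Γ → (x - y) (n' + m) = (x - y) n' :=
      fun n' m hm => by simp only [Pi.sub_apply, hx.2 n' m hm, hy.2 n' m hm]
    have hGam : n - S (QuotientAddGroup.mk n) ∈ Γ := by
      have h1 := QuotientAddGroup.eq.mp (hmkS (QuotientAddGroup.mk n))
      rwa [neg_add_eq_sub] at h1
    have h2 : (x - y) n = (x - y) (S (QuotientAddGroup.mk n)) := by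
      have h3 := hsubper (S (QuotientAddGroup.mk n)) _ hGam
      rw [show S (QuotientAddGroup.mk n) + (n - S (QuotientAddGroup.mk n)) = n by abel] at h3
      exact h3
    rw [h2]
    simpa [Pi.sub_apply] using hxU (QuotientAddGroup.mk n)
  set A := ⋃ y ∈ etaMap '' VGamma f Γ, U y with hA
  set B := ⋃ y ∈ (fixSet f Γ) \ (etaMap '' VGamma f Γ), U y with hB
  have hAopen : IsOpen A := isOpen_biUnion fun y _ => hUopen y
  have hBopen : IsOpen B := isOpen_biUnion fun y _ => hUopen y
  have hAmem : ∀ x ∈ fixSet f Γ, x ∈ A → x ∈ etaMap '' VGamma f Γ := by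
    intro x hx hxA
    obtain ⟨y, hy, hxU⟩ := Set.mem_iUnion₂.mp hxA
    have hsub := hUkey y (himg hy) x hx hxU
    have hxx : x = (x - y) + y := by rw [sub_add_cancel]
    rw [hxx]
    exact himg_add _ hsub _ hy
  have hBmem : ∀ x ∈ fixSet f Γ, x ∈ B → x ∉ etaMap '' VGamma f Γ := by
    intro x hx hxB hximg
    obtain ⟨y, hy, hxU⟩ := Set.mem_iUnion₂.mp hxB
    have hsub := hUkey y hy.1 x hx hxU
    have hyy : y = x - (x - y) := by rw [sub_sub_cancel]
    exact hy.2 (hyy ▸ himg_sub _ hximg _ hsub)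
  have hcover : fixSet f Γ ⊆ A ∪ B := by
    intro y hy
    by_cases h : y ∈ etaMap '' VGamma f Γ
    · exact Or.inl (Set.mem_biUnion h (hUself y))
    · exact Or.inr (Set.mem_biUnion ⟨hy, h⟩ (hUself y))
  refine Set.Subset.antisymm hsub1 ?_
  have hsX : connectedComponentIn (fixSet f Γ) 0 ⊆ fixSet f Γ := connectedComponentIn_subset _ _
  have hpre : IsPreconnected (connectedComponentIn (fixSet f Γ) 0) :=
    isPreconnected_connectedComponentIn
  have h0s : (0 : (Fin d → ℤ) → TT) ∈ connectedComponentIn (fixSet f Γ) 0 :=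
    mem_connectedComponentIn (zero_mem_fixSet f Γ)
  have hsAB : connectedComponentIn (fixSet f Γ) 0 ⊆ A ∪ B := hsX.trans hcover
  have hsA : ((connectedComponentIn (fixSet f Γ) 0) ∩ A).Nonempty :=
    ⟨0, h0s, Set.mem_biUnion h0img (hUself 0)⟩
  have hsB : (connectedComponentIn (fixSet f Γ) 0) ∩ B = ∅ := by
    by_contra hne
    have hBne : ((connectedComponentIn (fixSet f Γ) 0) ∩ B).Nonempty :=
      Set.nonempty_iff_ne_empty.mpr hne
    obtain ⟨z, hz⟩ := hpre A B hAopen hBopen hsAB hsA hBne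
    have hzX : z ∈ fixSet f Γ := hsX hz.1
    exact hBmem z hzX hz.2.2 (hAmem z hzX hz.2.1)
  intro x hxs
  rcases hsAB hxs with hA' | hB'
  · exact hAmem x (hsX hxs) hA'
  · have hxB : x ∈ (connectedComponentIn (fixSet f Γ) 0) ∩ B := ⟨hxs, hB'⟩
    rw [hsB] at hxB
    exact absurd hxB (Set.notMem_empty x)

end St13

end StHelpers

/-- `V_Γ(f)` is the real span of the real and imaginary parts of the
characters coming from `U(f) ∩ Ω_Γ`, and `η(V_Γ(f)) = Fix°_Γ(α_f)`. -/
theorem VGamma_span_and_eta_image {d : ℕ} (f : LP d) (hf : f ≠ 0)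
    (Γ : AddSubgroup (Fin d → ℤ)) (hΓ : Γ.FiniteIndex) :
    VGamma f Γ = ↑(Submodule.span ℝ
        (⋃ ω ∈ uVar f ∩ omegaGamma Γ,
          {(fun n => (cPow ω n).re), (fun n => (cPow ω n).im)} :
            Set ((Fin d → ℤ) → ℝ))) ∧
    etaMap '' VGamma f Γ = connectedComponentIn (fixSet f Γ) 0 := by
  constructor
  · ext w
    simp only [SetLike.mem_coe]
    constructor
    · intro hw
      exact St13.mem_span_of_mem_VGamma f Γ hΓ hw
    · intro hw
      have hle : Submodule.span ℝ
          (⋃ ω ∈ uVar f ∩ omegaGamma Γ,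
            ({(fun n => (cPow ω n).re), (fun n => (cPow ω n).im)} :
              Set ((Fin d → ℤ) → ℝ))) ≤ St13.VSub f Γ :=
        Submodule.span_le.mpr (St13.gen_subset_VGamma f Γ)
      exact hle hw
  · exact St13.eta_image_eq f Γ hΓ
end

section
/- Let f ∈ R_d be nonzero and let m_1,…,m_L ∈ ℤ^d be nonzero elements such that U(f) ∩ Ω ⊆ H_{m_1} ∪ ⋯ ∪ H_{m_L}. Let Γ ⊆ ℤ^d be a finite-index subgroup and for 1 ≤ j ≤ L set Δ_{Γ,j} = {n ∈ ℤ^d : ω^n = 1 for every ω ∈ Ω_Γ ∩ H_{m_j}}, a finite-index subgroup of ℤ^d containing Γ. Then Fix°_Γ(α_f) ⊆ Fix_{Δ_{Γ,1}}(σ) + ⋯ + Fix_{Δ_{Γ,L}}(σ), where Fix_Δ(σ) = {x ∈ 𝕋^{ℤ^d} : x_{n+m} = x_n for all n ∈ ℤ^d, m ∈ Δ} and the sum is taken inside the group 𝕋^{ℤ^d}. -/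
open scoped BigOperators ENNReal

noncomputable section AuxLSV

local instance fact01 : Fact ((0:ℝ) < 1) := ⟨zero_lt_one⟩

/-- Canonical lift of a point of `𝕋` to `[-1/2, 1/2)`. -/
noncomputable def lft (t : TT) : ℝ :=
  ((AddCircle.equivIco 1 (-(1/2) : ℝ) t : Set.Ico (-(1/2):ℝ) (-(1/2)+1)) : ℝ)

lemma lft_mem (t : TT) : -(1/2) ≤ lft t ∧ lft t < 1/2 := by
  have h := (AddCircle.equivIco 1 (-(1/2) : ℝ) t).2
  rw [Set.mem_Ico] at h
  unfold lft
  exact ⟨h.1, by linarith [h.2]⟩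

lemma lft_coe (t : TT) : ((lft t : ℝ) : TT) = t :=
  (AddCircle.equivIco 1 (-(1/2) : ℝ)).symm_apply_apply t

lemma lft_eq {r : ℝ} (h1 : -(1/2) ≤ r) (h2 : r < 1/2) : lft (r : TT) = r := by
  have hr : r ∈ Set.Ico (-(1/2):ℝ) (-(1/2)+1) := ⟨h1, by linarith⟩
  have h : (AddCircle.equivIco 1 (-(1/2):ℝ)) ((r:ℝ) : TT) = ⟨r, hr⟩ := by
    rw [Equiv.apply_eq_iff_eq_symm_apply]
    rfl
  simp only [lft, h]

lemma coe_eq_zero_small {r : ℝ} (h : |r| < 1) (h0 : ((r:ℝ) : TT) = 0) : r = 0 := by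
  rcases (AddCircle.coe_eq_zero_iff (1:ℝ)).mp h0 with ⟨n, hn⟩
  have hnr : (n : ℝ) = r := by simpa using hn
  have h1 : |(n:ℝ)| < 1 := hnr ▸ h
  have h2 : (|n| : ℤ) < 1 := by
    have : ((|n|:ℤ):ℝ) < 1 := by rw [Int.cast_abs]; exact h1
    exact_mod_cast this
  have h3 : n = 0 := Int.abs_lt_one_iff.mp h2
  simp [← hnr, h3]

end AuxLSV
noncomputable section AuxLSV2

/-- The reduction `ℝ → 𝕋` as an additive homomorphism. -/
noncomputable def rHom : ℝ →+ TT := QuotientAddGroup.mk' (AddSubgroup.zmultiples (1:ℝ))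

lemma rHom_apply (r : ℝ) : rHom r = (r : TT) := rfl

lemma coe_sum_TT {ι : Type*} (s : Finset ι) (g : ι → ℝ) :
    ((∑ i ∈ s, g i : ℝ) : TT) = ∑ i ∈ s, ((g i : ℝ) : TT) := by
  rw [← rHom_apply, map_sum]
  rfl

/-- `Fix_Γ(α_f)` as an additive subgroup. -/
def fixSubgroup {d : ℕ} (f : LP d) (Γ : AddSubgroup (Fin d → ℤ)) :
    AddSubgroup ((Fin d → ℤ) → TT) where
  carrier := fixSet f Γ
  zero_mem' := ⟨fun n => by simp, fun n m _ => rfl⟩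
  add_mem' := by
    rintro a b ⟨ha1, ha2⟩ ⟨hb1, hb2⟩
    refine ⟨fun n => ?_, fun n m hm => by simp [Pi.add_apply, ha2 n m hm, hb2 n m hm]⟩
    have h : (Finsupp.sum f.coeff fun m c => c • (a + b) (n + m))
        = (Finsupp.sum f.coeff fun m c => c • a (n + m)) + (Finsupp.sum f.coeff fun m c => c • b (n + m)) := by
      rw [← Finsupp.sum_add]
      exact Finsupp.sum_congr (fun k _ => by simp [smul_add])
    rw [h, ha1 n, hb1 n, add_zero]
  neg_mem' := by
    rintro a ⟨ha1, ha2⟩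
    refine ⟨fun n => ?_, fun n m hm => by simp [Pi.neg_apply, ha2 n m hm]⟩
    have h : (Finsupp.sum f.coeff fun m c => c • (-a) (n + m))
        = -(Finsupp.sum f.coeff fun m c => c • a (n + m)) := by
      rw [← Finsupp.sum_neg]
      exact Finsupp.sum_congr (fun k _ => by simp)
    rw [h, ha1 n, neg_zero]

/-- The sum `Fix_{Δ_1}(σ) + ⋯ + Fix_{Δ_L}(σ)` as an additive subgroup. -/
def capSet {d L : ℕ} (m : Fin L → (Fin d → ℤ)) (Γ : AddSubgroup (Fin d → ℤ)) :
    AddSubgroup ((Fin d → ℤ) → TT) where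
  carrier := {x | ∃ y : Fin L → ((Fin d → ℤ) → TT),
    (∀ j, y j ∈ fixSigma {n : Fin d → ℤ | ∀ ω ∈ omegaGamma Γ ∩ subH (m j), cPow ω n = 1}) ∧
    x = ∑ j, y j}
  zero_mem' := ⟨0, fun j n p _ => rfl, by simp⟩
  add_mem' := by
    rintro a b ⟨ya, hya, rfl⟩ ⟨yb, hyb, rfl⟩
    refine ⟨ya + yb, fun j n p hp => ?_, ?_⟩
    · show (ya j + yb j) (n + p) = (ya j + yb j) n
      simp only [Pi.add_apply]
      rw [hya j n p hp, hyb j n p hp]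
    · rw [← Finset.sum_add_distrib]
      rfl
  neg_mem' := by
    rintro a ⟨ya, hya, rfl⟩
    refine ⟨-ya, fun j n p hp => ?_, ?_⟩
    · show (-(ya j)) (n + p) = (-(ya j)) n
      simp only [Pi.neg_apply]
      rw [hya j n p hp]
    · simp

end AuxLSV2
noncomputable section AuxLSV3

theorem lift_small {d : ℕ} (f : LP d) (Γ : AddSubgroup (Fin d → ℤ)) {δ : ℝ}
    (hδ2 : δ ≤ 1/2) (hδS : δ * (∑ k ∈ f.coeff.support, |(f.coeff k : ℝ)|) < 1)
    (x : (Fin d → ℤ) → TT) (hx : x ∈ fixSet f Γ)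
    (hsmall : ∀ n, ∃ r : ℝ, |r| < δ ∧ (r : TT) = x n) :
    ∃ w ∈ VGamma f Γ, x = etaMap w := by
  set w : (Fin d → ℤ) → ℝ := fun n => lft (x n) with hw
  have hwx : ∀ n, ((w n : ℝ) : TT) = x n := fun n => lft_coe (x n)
  have hwsmall : ∀ n, |w n| < δ := by
    intro n
    obtain ⟨r, hr, hrx⟩ := hsmall n
    have h1 : -(1/2) ≤ r ∧ r < 1/2 := by
      rcases abs_lt.mp hr with ⟨h1, h2⟩; constructor <;> linarith
    have h2 : w n = r := by
      show lft (x n) = r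
      rw [← hrx, lft_eq h1.1 h1.2]
    rwa [h2]
  refine ⟨w, ⟨fun n p hp => ?_, fun n => ?_⟩, ?_⟩
  · show lft (x (n + p)) = lft (x n)
    rw [hx.2 n p hp]
  · -- the defining equation of `V_Γ(f)` holds
    set r : ℝ := Finsupp.sum f.coeff fun k c => (c:ℝ) * w (n + k) with hr
    have hcoe : ((r : ℝ) : TT) = 0 := by
      rw [← hx.1 n]
      rw [hr]
      simp only [Finsupp.sum]
      rw [coe_sum_TT]
      refine Finset.sum_congr rfl (fun k _ => ?_)
      rw [← zsmul_eq_mul, ← rHom_apply, map_zsmul, rHom_apply, hwx]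
    have hrb : |r| < 1 := by
      calc |r| ≤ ∑ k ∈ f.coeff.support, |(f.coeff k : ℝ) * w (n+k)| := by
            rw [hr]; simp only [Finsupp.sum]; exact Finset.abs_sum_le_sum_abs _ _
        _ ≤ ∑ k ∈ f.coeff.support, |(f.coeff k : ℝ)| * δ := by
            refine Finset.sum_le_sum fun k _ => ?_
            rw [abs_mul]
            exact mul_le_mul_of_nonneg_left (le_of_lt (hwsmall _)) (abs_nonneg _)
        _ = δ * ∑ k ∈ f.coeff.support, |(f.coeff k : ℝ)| := by rw [← Finset.sum_mul, mul_comm]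
        _ < 1 := hδS
    exact coe_eq_zero_small hrb hcoe
  · funext n
    exact (hwx n).symm

end AuxLSV3
noncomputable section AuxLSV4

theorem fourier_decomp {d L : ℕ} (f : LP d) (m : Fin L → (Fin d → ℤ))
    (hcover : uVar f ∩ torsionPts d ⊆ ⋃ j, subH (m j))
    (Γ : AddSubgroup (Fin d → ℤ)) (hΓ : Γ.FiniteIndex)
    (w : (Fin d → ℤ) → ℝ) (hw : w ∈ VGamma f Γ) :
    ∃ y : Fin L → ((Fin d → ℤ) → TT),
      (∀ j, y j ∈ fixSigma {n : Fin d → ℤ | ∀ ω ∈ omegaGamma Γ ∩ subH (m j), cPow ω n = 1}) ∧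
      etaMap w = ∑ j, y j := by
  classical
  haveI hfinQ : Finite ((Fin d → ℤ) ⧸ Γ) := Nat.finite_of_card_ne_zero hΓ.index_ne_zero
  haveI : Fintype ((Fin d → ℤ) ⧸ Γ) := Fintype.ofFinite _
  set mkh : (Fin d → ℤ) →+ (Fin d → ℤ) ⧸ Γ := QuotientAddGroup.mk' Γ with hmkh
  have hmk_out : ∀ q : (Fin d → ℤ) ⧸ Γ, mkh q.out = q := fun q => Quotient.out_eq' q
  have hper : ∀ n k : Fin d → ℤ, mkh n = mkh k → w n = w k := by
    intro n k h
    simp only [hmkh, QuotientAddGroup.mk'_apply] at h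
    have hmem : n - k ∈ Γ := (QuotientAddGroup.eq_iff_sub_mem).mp h
    have h2 := hw.1 k (n - k) hmem
    have h3 : k + (n - k) = n := by abel
    rw [h3] at h2
    exact h2
  set ω : AddChar ((Fin d → ℤ) ⧸ Γ) ℂ → Fin d → ℂ :=
    fun ψ i => ψ (mkh (Pi.single i 1)) with hωdef
  have hmap_sum : ∀ (ψ : AddChar ((Fin d → ℤ) ⧸ Γ) ℂ) (s : Finset (Fin d))
      (g : Fin d → (Fin d → ℤ) ⧸ Γ), ψ (∑ i ∈ s, g i) = ∏ i ∈ s, ψ (g i) := by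
    intro ψ s g
    induction s using Finset.induction_on with
    | empty => simp
    | insert a s h ih => rw [Finset.sum_insert h, Finset.prod_insert h, AddChar.map_add_eq_mul, ih]
  have hsingle : ∀ k : Fin d → ℤ, k = ∑ i, (k i) • Pi.single i (1:ℤ) := by
    intro k; funext j
    simp [Finset.sum_apply, Pi.single_apply]
  have hcPow : ∀ (ψ : AddChar ((Fin d → ℤ) ⧸ Γ) ℂ) (k : Fin d → ℤ),
      cPow (ω ψ) k = ψ (mkh k) := by
    intro ψ k
    have h1 : mkh k = ∑ i, (k i) • mkh (Pi.single i 1) := by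
      conv_lhs => rw [hsingle k]
      rw [map_sum]
      exact Finset.sum_congr rfl fun i _ => map_zsmul mkh _ _
    rw [h1, hmap_sum]
    simp only [cPow]
    refine Finset.prod_congr rfl fun i _ => ?_
    rw [AddChar.map_zsmul_eq_zpow]
  have hω_torus : ∀ ψ, ω ψ ∈ torus d := by
    intro ψ i
    exact AddChar.norm_apply ψ _
  have hNpos : 0 < Fintype.card ((Fin d → ℤ) ⧸ Γ) := Fintype.card_pos
  have hω_pow : ∀ (ψ : AddChar ((Fin d → ℤ) ⧸ Γ) ℂ) (q : (Fin d → ℤ) ⧸ Γ),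
      ψ q ^ Fintype.card ((Fin d → ℤ) ⧸ Γ) = 1 := by
    intro ψ q
    rw [← AddChar.map_nsmul_eq_pow, card_nsmul_eq_zero, AddChar.map_zero_eq_one]
  have hω_tors : ∀ ψ, ω ψ ∈ torsionPts d :=
    fun ψ => ⟨hω_torus ψ, fun i => ⟨_, hNpos, hω_pow ψ _⟩⟩
  have hω_og : ∀ ψ, ω ψ ∈ omegaGamma Γ := by
    intro ψ
    refine ⟨hω_torus ψ, fun k hk => ?_⟩
    rw [hcPow ψ k]
    have h1 : mkh k = 0 := by
      simp only [hmkh, QuotientAddGroup.mk'_apply]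
      exact (QuotientAddGroup.eq_zero_iff k).mpr hk
    rw [h1, AddChar.map_zero_eq_one]
  -- Fourier coefficients
  set uQ : ((Fin d → ℤ) ⧸ Γ) → ℂ := fun q => (w q.out : ℂ) with huQ
  set c : AddChar ((Fin d → ℤ) ⧸ Γ) ℂ → ℂ :=
    (AddChar.complexBasis ((Fin d → ℤ) ⧸ Γ)).equivFun uQ with hc
  have hw_eq : ∀ n : Fin d → ℤ, (w n : ℂ) = ∑ ψ, c ψ * ψ (mkh n) := by
    intro n
    have h1 : (w n : ℂ) = uQ (mkh n) := by
      simp only [huQ]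
      norm_cast
      exact hper n _ (by rw [hmk_out])
    have h2 := congrFun ((AddChar.complexBasis ((Fin d → ℤ) ⧸ Γ)).sum_equivFun uQ) (mkh n)
    rw [h1, ← h2, Finset.sum_apply]
    refine Finset.sum_congr rfl fun ψ _ => ?_
    rw [Pi.smul_apply, AddChar.complexBasis_apply, smul_eq_mul]
  have hfC : ∀ n, ∑ k ∈ f.coeff.support, (f.coeff k : ℂ) * (w (n + k) : ℂ) = 0 := by
    intro n
    have h0 := hw.2 n
    simp only [Finsupp.sum] at h0
    have h1 : ((∑ k ∈ f.coeff.support, (f.coeff k : ℝ) * w (n + k) : ℝ) : ℂ) = 0 := by rw [h0]; norm_num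
    push_cast at h1
    exact h1
  have hlEval : ∀ ψ, lEval f (ω ψ) = ∑ k ∈ f.coeff.support, (f.coeff k : ℂ) * ψ (mkh k) := by
    intro ψ
    simp only [lEval, Finsupp.sum]
    refine Finset.sum_congr rfl fun k _ => ?_
    rw [← hcPow ψ k]
    rfl
  have hann : ∀ ψ, c ψ * lEval f (ω ψ) = 0 := by
    apply Fintype.linearIndependent_iff.mp (AddChar.linearIndependent ((Fin d → ℤ) ⧸ Γ) ℂ)
      (fun ψ => c ψ * lEval f (ω ψ))
    funext q
    simp only [Finset.sum_apply, Pi.smul_apply, smul_eq_mul, Pi.zero_apply]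
    have e1 : ∀ k, (w (q.out + k) : ℂ) = ∑ ψ : AddChar ((Fin d → ℤ) ⧸ Γ) ℂ,
        c ψ * (ψ q * ψ (mkh k)) := by
      intro k
      rw [hw_eq (q.out + k)]
      refine Finset.sum_congr rfl fun ψ _ => ?_
      rw [map_add, AddChar.map_add_eq_mul, hmk_out]
    calc ∑ ψ : AddChar ((Fin d → ℤ) ⧸ Γ) ℂ, c ψ * lEval f (ω ψ) * ψ q
        = ∑ ψ : AddChar ((Fin d → ℤ) ⧸ Γ) ℂ, ∑ k ∈ f.coeff.support,
            (f.coeff k : ℂ) * (c ψ * (ψ q * ψ (mkh k))) := by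
          refine Finset.sum_congr rfl fun ψ _ => ?_
          rw [hlEval ψ, Finset.mul_sum, Finset.sum_mul]
          exact Finset.sum_congr rfl fun k _ => by ring
      _ = ∑ k ∈ f.coeff.support, ∑ ψ : AddChar ((Fin d → ℤ) ⧸ Γ) ℂ,
            (f.coeff k : ℂ) * (c ψ * (ψ q * ψ (mkh k))) := Finset.sum_comm
      _ = ∑ k ∈ f.coeff.support, (f.coeff k : ℂ) * (w (q.out + k) : ℂ) := by
          refine Finset.sum_congr rfl fun k _ => ?_
          rw [e1 k, Finset.mul_sum]
      _ = 0 := hfC q.out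
  have hchoice : ∀ ψ, c ψ ≠ 0 → ∃ j, ω ψ ∈ subH (m j) := by
    intro ψ hcψ
    have he : lEval f (ω ψ) = 0 := by
      rcases mul_eq_zero.mp (hann ψ) with h | h
      · exact absurd h hcψ
      · exact h
    have hmem : ω ψ ∈ uVar f ∩ torsionPts d := ⟨⟨hω_torus ψ, he⟩, hω_tors ψ⟩
    simpa [Set.mem_iUnion] using hcover hmem
  have hpick : ∀ ψ, ∃ o : Option (Fin L), (o = none → c ψ = 0) ∧
      (∀ j, o = some j → ω ψ ∈ subH (m j)) := by
    intro ψ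
    by_cases h : ∃ j, ω ψ ∈ subH (m j)
    · refine ⟨some h.choose, by simp, fun j hj => ?_⟩
      rw [← Option.some_inj.mp hj]
      exact h.choose_spec
    · refine ⟨none, fun _ => ?_, fun j hj => by cases hj⟩
      by_contra hcψ
      exact h (hchoice ψ hcψ)
  choose pick hpick_none hpick_some using hpick
  refine ⟨fun j n => (((∑ ψ : AddChar ((Fin d → ℤ) ⧸ Γ) ℂ,
      if pick ψ = some j then (c ψ * ψ (mkh n)).re else 0 : ℝ)) : TT), fun j => ?_, ?_⟩
  · intro n p hp
    refine congrArg (fun r : ℝ => (r : TT)) (Finset.sum_congr rfl fun ψ _ => ?_)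
    by_cases hψ : pick ψ = some j
    · rw [if_pos hψ, if_pos hψ]
      have h1 : ψ (mkh p) = 1 := by
        rw [← hcPow ψ p]
        exact hp (ω ψ) ⟨hω_og ψ, hpick_some ψ j hψ⟩
      rw [map_add, AddChar.map_add_eq_mul, h1, mul_one]
    · rw [if_neg hψ, if_neg hψ]
  · funext n
    show ((w n : ℝ) : TT) = _
    rw [Finset.sum_apply]
    have hreal : (∑ j, ∑ ψ : AddChar ((Fin d → ℤ) ⧸ Γ) ℂ,
        if pick ψ = some j then (c ψ * ψ (mkh n)).re else 0) = w n := by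
      rw [Finset.sum_comm]
      have hterm : ∀ ψ : AddChar ((Fin d → ℤ) ⧸ Γ) ℂ,
          (∑ j, if pick ψ = some j then (c ψ * ψ (mkh n)).re else 0)
            = (c ψ * ψ (mkh n)).re := by
        intro ψ
        cases hψ : pick ψ with
        | none => simp [hψ, hpick_none ψ hψ]
        | some j0 => simp [hψ]
      rw [Finset.sum_congr rfl fun ψ _ => hterm ψ]
      rw [← Complex.re_sum, ← hw_eq n, Complex.ofReal_re]
    rw [← hreal, coe_sum_TT]

end AuxLSV4
noncomputable section AuxLSV5

theorem capture_nbhd {d L : ℕ} (f : LP d) (m : Fin L → (Fin d → ℤ))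
    (hcover : uVar f ∩ torsionPts d ⊆ ⋃ j, subH (m j))
    (Γ : AddSubgroup (Fin d → ℤ)) (hΓ : Γ.FiniteIndex) :
    ∃ U : Set ((Fin d → ℤ) → TT), IsOpen U ∧ (0 : (Fin d → ℤ) → TT) ∈ U ∧
      ∀ x ∈ U, x ∈ fixSet f Γ → x ∈ capSet m Γ := by
  classical
  haveI hfinQ : Finite ((Fin d → ℤ) ⧸ Γ) := Nat.finite_of_card_ne_zero hΓ.index_ne_zero
  set S : ℝ := ∑ k ∈ f.coeff.support, |(f.coeff k : ℝ)| with hS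
  have hS0 : 0 ≤ S := Finset.sum_nonneg fun k _ => abs_nonneg _
  set δ : ℝ := 1 / (2 * (S + 1)) with hδ
  have hδpos : 0 < δ := by rw [hδ]; positivity
  have hδ2 : δ ≤ 1/2 := by
    rw [hδ, div_le_div_iff₀ (by positivity) (by norm_num)]
    nlinarith
  have hδS : δ * S < 1 := by
    rw [hδ, div_mul_eq_mul_div, div_lt_one (by positivity)]
    nlinarith
  set B : Set TT := (fun r : ℝ => (r : TT)) '' Set.Ioo (-δ) δ with hB
  have hBopen : IsOpen B := by
    rw [hB]
    exact QuotientAddGroup.isOpenMap_coe _ isOpen_Ioo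
  have hB0 : (0 : TT) ∈ B := ⟨0, ⟨by linarith, hδpos⟩, by norm_num⟩
  refine ⟨⋂ q : (Fin d → ℤ) ⧸ Γ, (fun x : (Fin d → ℤ) → TT => x q.out) ⁻¹' B,
    isOpen_iInter_of_finite fun q => (continuous_apply _).isOpen_preimage _ hBopen,
    Set.mem_iInter.mpr fun q => hB0, ?_⟩
  intro x hxU hxF
  have hsmall : ∀ n, ∃ r : ℝ, |r| < δ ∧ (r : TT) = x n := by
    intro n
    set q : (Fin d → ℤ) ⧸ Γ := ((n : (Fin d → ℤ) ⧸ Γ)) with hq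
    have h1 : x n = x q.out := by
      have h0 : ((n : (Fin d → ℤ) ⧸ Γ)) = ((q.out : (Fin d → ℤ) ⧸ Γ)) :=
        (Quotient.out_eq' q).symm
      have hmem : n - q.out ∈ Γ := (QuotientAddGroup.eq_iff_sub_mem).mp h0
      have h2 := hxF.2 q.out (n - q.out) hmem
      have h3 : q.out + (n - q.out) = n := by abel
      rw [h3] at h2
      exact h2
    obtain ⟨r, hrIoo, hrx⟩ := Set.mem_iInter.mp hxU q
    exact ⟨r, abs_lt.mpr ⟨by linarith [hrIoo.1], hrIoo.2⟩, hrx.trans h1.symm⟩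
  obtain ⟨w, hwV, hxw⟩ := lift_small f Γ hδ2 (by rw [← hS]; exact hδS) x hxF hsmall
  obtain ⟨y, hy, hsum⟩ := fourier_decomp f m hcover Γ hΓ w hwV
  exact ⟨y, hy, hxw.trans hsum⟩

end AuxLSV5

/-- If `U(f) ∩ Ω ⊆ H_{m_1} ∪ ⋯ ∪ H_{m_L}`, then
`Fix°_Γ(α_f) ⊆ Fix_{Δ_{Γ,1}}(σ) + ⋯ + Fix_{Δ_{Γ,L}}(σ)`. -/
theorem fix_component_capture {d L : ℕ} (f : LP d) (hf : f ≠ 0)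
    (m : Fin L → (Fin d → ℤ)) (hm : ∀ j, m j ≠ 0)
    (hcover : uVar f ∩ torsionPts d ⊆ ⋃ j, subH (m j))
    (Γ : AddSubgroup (Fin d → ℤ)) (hΓ : Γ.FiniteIndex) :
    connectedComponentIn (fixSet f Γ) 0 ⊆
      {x | ∃ y : Fin L → ((Fin d → ℤ) → TT),
        (∀ j, y j ∈ fixSigma {n : Fin d → ℤ | ∀ ω ∈ omegaGamma Γ ∩ subH (m j), cPow ω n = 1}) ∧
        x = ∑ j, y j} := by
  classical
  have h0K : (0 : (Fin d → ℤ) → TT) ∈ fixSet f Γ := (fixSubgroup f Γ).zero_mem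
  intro x hx
  rw [connectedComponentIn_eq_image h0K] at hx
  obtain ⟨x', hx', rfl⟩ := hx
  obtain ⟨U, hUopen, hU0, hUsub⟩ := capture_nbhd f m hcover Γ hΓ
  let T : AddSubgroup ↥(fixSubgroup f Γ) := (capSet m Γ).comap (fixSubgroup f Γ).subtype
  have hT_nhds : (T : Set ↥(fixSubgroup f Γ)) ∈ nhds (0 : ↥(fixSubgroup f Γ)) := by
    refine Filter.mem_of_superset ((hUopen.preimage continuous_subtype_val).mem_nhds hU0) ?_
    intro z hz
    exact hUsub _ hz z.2
  have hTopen : IsOpen (T : Set ↥(fixSubgroup f Γ)) := AddSubgroup.isOpen_of_mem_nhds T hT_nhds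
  have hTclopen : IsClopen (T : Set ↥(fixSubgroup f Γ)) :=
    ⟨AddSubgroup.isClosed_of_isOpen T hTopen, hTopen⟩
  have hsub := hTclopen.connectedComponent_subset T.zero_mem
  exact hsub hx'
end

section
/- Let d ≥ 1 and let f ∈ R_d be a nonzero irreducible Laurent polynomial. For every ε > 0 and every function ψ: ℕ → ℕ with ψ(n) → ∞ as n → ∞ (no matter how slowly), there exists L ≥ 1 such that for every finite-index subgroup Γ ⊆ ℤ^d with ⟨Γ⟩ > L and every ω ∈ Ω_Γ with f(ω) ≠ 0, the Euclidean distance in ℂ^d from ω to U(f) satisfies dist(ω, U(f)) ≥ e^{−ε ψ(⟨Γ⟩)|Ω_Γ|} (the distance to the empty set being +∞). -/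
open scoped BigOperators ENNReal

-- Auxiliary definitions and lemmas
noncomputable def suppB {d : ℕ} (f : LP d) : ℝ := ∑ n ∈ f.coeff.support, |(f.coeff n : ℝ)|
noncomputable def lipC {d : ℕ} (f : LP d) : ℝ :=
  ∑ n ∈ f.coeff.support, |(f.coeff n : ℝ)| * (∑ i, |(n i : ℝ)|)


-- Lemma A: coordinates are roots of unity
lemma coord_pow_eq_one {d : ℕ} (Γ : AddSubgroup (Fin d → ℤ)) [Γ.FiniteIndex]
    {ω : Fin d → ℂ} (hω : ω ∈ omegaGamma Γ) (i : Fin d) : ω i ^ Γ.index = 1 := by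
  have hm : Γ.index • (Pi.single i (1:ℤ)) ∈ Γ := AddSubgroup.nsmul_index_mem Γ _
  have h := hω.2 _ hm
  rw [cPow] at h
  rw [Finset.prod_eq_single i] at h
  · simpa using h
  · intro j _ hj; simp [Pi.single_apply, hj]
  · simp

lemma omegaGamma_finite {d : ℕ} (Γ : AddSubgroup (Fin d → ℤ)) [Γ.FiniteIndex] :
    (omegaGamma Γ).Finite := by
  have h1 : (omegaGamma Γ) ⊆ Set.pi Set.univ (fun i : Fin d => {z : ℂ | z ^ Γ.index = 1}) := by
    intro ω hω i _
    exact coord_pow_eq_one Γ hω i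
  refine Set.Finite.subset (Set.Finite.pi fun i => ?_) h1
  have : {z : ℂ | z ^ Γ.index = 1} ⊆ {z : ℂ | (Polynomial.X ^ Γ.index - Polynomial.C 1 : Polynomial ℂ).IsRoot z} := by
    intro z hz
    simp only [Set.mem_setOf_eq] at hz
    simp [Polynomial.IsRoot, hz]
  refine Set.Finite.subset (Polynomial.finite_setOf_isRoot ?_) this
  have hind := AddSubgroup.FiniteIndex.index_ne_zero (H := Γ)
  exact (Polynomial.monic_X_pow_sub_C (1:ℂ) hind).ne_zero

lemma omegaGamma_nonempty {d : ℕ} (Γ : AddSubgroup (Fin d → ℤ)) :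
    (omegaGamma Γ).Nonempty := by
  refine ⟨fun _ => 1, fun i => by simp, fun m _ => by simp [cPow]⟩

lemma one_le_ncard_omegaGamma {d : ℕ} (Γ : AddSubgroup (Fin d → ℤ)) [Γ.FiniteIndex] :
    1 ≤ (omegaGamma Γ).ncard := by
  have := (omegaGamma_finite Γ)
  have h := Set.ncard_pos this |>.mpr (omegaGamma_nonempty Γ)
  omega


lemma abs_pow_sub_pow_nat (a b : ℂ) (ha : ‖a‖ = 1) (hb : ‖b‖ = 1) (k : ℕ) :
    ‖a ^ k - b ^ k‖ ≤ k * ‖a - b‖ := by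
  induction k with
  | zero => simp
  | succ k ih =>
    have : a ^ (k+1) - b ^ (k+1) = a ^ k * (a - b) + (a ^ k - b ^ k) * b := by ring
    rw [this]
    calc ‖a ^ k * (a - b) + (a ^ k - b ^ k) * b‖
        ≤ ‖a ^ k * (a - b)‖ + ‖(a ^ k - b ^ k) * b‖ :=
          norm_add_le _ _
      _ = ‖a - b‖ + ‖a ^ k - b ^ k‖ := by
          simp [map_mul, map_pow, ha, hb]
      _ ≤ ‖a - b‖ + k * ‖a - b‖ := by linarith
      _ = (k + 1 : ℕ) * ‖a - b‖ := by push_cast; ring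

lemma abs_zpow_sub_zpow (a b : ℂ) (ha : ‖a‖ = 1) (hb : ‖b‖ = 1) (k : ℤ) :
    ‖a ^ k - b ^ k‖ ≤ |(k:ℝ)| * ‖a - b‖ := by
  have ha0 : a ≠ 0 := by intro h; rw [h] at ha; simp at ha
  have hb0 : b ≠ 0 := by intro h; rw [h] at hb; simp at hb
  rcases k with k | k
  · simpa using abs_pow_sub_pow_nat a b ha hb k
  · -- k = -(k+1)
    have h1 : a ^ (Int.negSucc k) - b ^ (Int.negSucc k)
        = (b ^ (k+1) - a ^ (k+1)) * (a ^ (k+1))⁻¹ * (b ^ (k+1))⁻¹ := by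
      rw [zpow_negSucc, zpow_negSucc]
      field_simp
    rw [h1]
    have h2 : ‖(b ^ (k+1) - a ^ (k+1)) * (a ^ (k+1))⁻¹ * (b ^ (k+1))⁻¹‖
        = ‖b ^ (k+1) - a ^ (k+1)‖ := by
      simp [map_mul, map_inv₀, map_pow, ha, hb]
    rw [h2]
    have := abs_pow_sub_pow_nat b a hb ha (k+1)
    rw [norm_sub_rev a b]
    calc ‖b ^ (k+1) - a ^ (k+1)‖ ≤ (k+1 : ℕ) * ‖b - a‖ := this
      _ ≤ |(Int.negSucc k : ℝ)| * ‖b - a‖ := by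
          apply mul_le_mul_of_nonneg_right _ (norm_nonneg _)
          rw [Int.cast_negSucc]
          push_cast
          rw [abs_neg, abs_of_nonneg (by positivity)]

lemma abs_prod_sub_prod {d : ℕ} (a b : Fin d → ℂ) (ha : ∀ i, ‖a i‖ = 1)
    (hb : ∀ i, ‖b i‖ = 1) (s : Finset (Fin d)) :
    ‖∏ i ∈ s, a i - ∏ i ∈ s, b i‖ ≤ ∑ i ∈ s, ‖a i - b i‖ := by
  induction s using Finset.induction with
  | empty => simp
  | @insert _ _ hx ih =>
    rename_i x s
    rw [Finset.prod_insert hx, Finset.prod_insert hx, Finset.sum_insert hx]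
    have habs : ‖∏ i ∈ s, a i‖ = 1 := by
      rw [norm_prod]; exact Finset.prod_eq_one fun i _ => ha i
    have hex : a x * ∏ i ∈ s, a i - b x * ∏ i ∈ s, b i
        = (a x - b x) * ∏ i ∈ s, a i + b x * (∏ i ∈ s, a i - ∏ i ∈ s, b i) := by ring
    rw [hex]
    calc _ ≤ ‖(a x - b x) * ∏ i ∈ s, a i‖
            + ‖b x * (∏ i ∈ s, a i - ∏ i ∈ s, b i)‖ := norm_add_le _ _
      _ = ‖a x - b x‖ + ‖∏ i ∈ s, a i - ∏ i ∈ s, b i‖ := by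
          simp [map_mul, habs, hb x]
      _ ≤ _ := by linarith

lemma coord_le_euclid {d : ℕ} (x y : Fin d → ℂ) (i : Fin d) :
    ‖x i - y i‖ ≤ euclid x y := by
  rw [euclid, show ‖x i - y i‖ = Real.sqrt (‖x i - y i‖ ^ 2) by
    rw [Real.sqrt_sq (norm_nonneg _)]]
  apply Real.sqrt_le_sqrt
  exact Finset.single_le_sum (f := fun j => ‖x j - y j‖ ^ 2)
    (fun j _ => by positivity) (Finset.mem_univ i)

lemma lEval_lipschitz {d : ℕ} (f : LP d) {z w : Fin d → ℂ} (hz : z ∈ torus d) (hw : w ∈ torus d) :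
    ‖lEval f z - lEval f w‖ ≤ lipC f * euclid z w := by
  rw [lEval, lEval, Finsupp.sum, Finsupp.sum, ← Finset.sum_sub_distrib]
  calc ‖∑ n ∈ f.coeff.support, ((f.coeff n : ℂ) * ∏ i, z i ^ (n i) - (f.coeff n : ℂ) * ∏ i, w i ^ (n i))‖
      ≤ ∑ n ∈ f.coeff.support, ‖(f.coeff n : ℂ) * ∏ i, z i ^ (n i) - (f.coeff n : ℂ) * ∏ i, w i ^ (n i)‖ :=
        norm_sum_le _ _
    _ ≤ ∑ n ∈ f.coeff.support, |(f.coeff n : ℝ)| * ((∑ i, |(n i : ℝ)|) * euclid z w) := by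
        apply Finset.sum_le_sum
        intro n _
        rw [← mul_sub, norm_mul]
        have hc : ‖(f.coeff n : ℂ)‖ = |(f.coeff n : ℝ)| := by
          rw [show ((f.coeff n : ℤ) : ℂ) = ((f.coeff n : ℝ) : ℂ) by push_cast; ring, Complex.norm_real, Real.norm_eq_abs]
        rw [hc]
        apply mul_le_mul_of_nonneg_left _ (abs_nonneg _)
        calc ‖∏ i, z i ^ (n i) - ∏ i, w i ^ (n i)‖
            ≤ ∑ i, ‖z i ^ (n i) - w i ^ (n i)‖ := by
              apply abs_prod_sub_prod
              · intro i; rw [norm_zpow, hz i, one_zpow]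
              · intro i; rw [norm_zpow, hw i, one_zpow]
          _ ≤ ∑ i, |(n i : ℝ)| * euclid z w := by
              apply Finset.sum_le_sum
              intro i _
              calc ‖z i ^ (n i) - w i ^ (n i)‖
                  ≤ |((n i : ℤ) : ℝ)| * ‖z i - w i‖ :=
                    abs_zpow_sub_zpow _ _ (hz i) (hw i) _
                _ ≤ |(n i : ℝ)| * euclid z w := by
                    apply mul_le_mul_of_nonneg_left (coord_le_euclid z w i) (abs_nonneg _)
          _ = (∑ i, |(n i : ℝ)|) * euclid z w := by rw [Finset.sum_mul]
    _ = lipC f * euclid z w := by rw [lipC, Finset.sum_mul]; apply Finset.sum_congr rfl; intros; ring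


lemma isIntegral_of_pow_eq_one' {R A : Type*} [CommRing R] [CommRing A] [Algebra R A]
    {z : A} {k : ℕ} (hk : k ≠ 0) (h : z ^ k = 1) : IsIntegral R z :=
  ⟨Polynomial.X ^ k - Polynomial.C 1, Polynomial.monic_X_pow_sub_C 1 hk, by simp [h]⟩

lemma abs_eq_one_of_pow_eq_one {z : ℂ} {k : ℕ} (hk : k ≠ 0) (h : z ^ k = 1) :
    ‖z‖ = 1 := by
  have h1 : ‖z‖ ^ k = 1 := by rw [← norm_pow, h, norm_one]
  rcases lt_trichotomy (‖z‖) 1 with h2 | h2 | h2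
  · exact absurd h1 (by have := pow_lt_one₀ (norm_nonneg z) h2 hk; linarith)
  · exact h2
  · exact absurd h1 (by have := one_lt_pow₀ h2 hk; linarith)

lemma one_le_suppB {d : ℕ} (f : LP d) (hf : f ≠ 0) : 1 ≤ suppB f := by
  obtain ⟨n₀, hn₀⟩ := Finsupp.support_nonempty_iff.mpr (mt AddMonoidAlgebra.coeff_eq_zero.mp hf)
  have h1 : (1:ℝ) ≤ |(f.coeff n₀ : ℝ)| := by
    have := Int.one_le_abs (Finsupp.mem_support_iff.mp hn₀)
    calc (1:ℝ) ≤ (|f.coeff n₀| : ℤ) := by exact_mod_cast this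
      _ = |(f.coeff n₀ : ℝ)| := by push_cast; ring
  refine h1.trans ?_
  show |(f.coeff n₀ : ℝ)| ≤ ∑ n ∈ f.coeff.support, |(f.coeff n : ℝ)|
  exact Finset.single_le_sum (f := fun n => |(f.coeff n : ℝ)|) (fun n _ => abs_nonneg _) hn₀

lemma alg_lower_bound {d : ℕ} (f : LP d) (hf : f ≠ 0) (Γ : AddSubgroup (Fin d → ℤ))
    [Γ.FiniteIndex] {ω : Fin d → ℂ} (hω : ω ∈ omegaGamma Γ) (hne : lEval f ω ≠ 0) :
    1 ≤ ‖lEval f ω‖ * (suppB f) ^ ((omegaGamma Γ).ncard - 1) := by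
  classical
  set k := Γ.index with hkdef
  have hk : k ≠ 0 := AddSubgroup.FiniteIndex.index_ne_zero
  have hroot : ∀ i, ω i ^ k = 1 := coord_pow_eq_one Γ hω
  set K := IntermediateField.adjoin ℚ (Set.range ω) with hKdef
  haveI : Finite ↑(Set.range ω) := (Set.finite_range ω).to_subtype
  haveI : FiniteDimensional ℚ K := IntermediateField.finiteDimensional_adjoin
    (fun x hx => by
      obtain ⟨i, rfl⟩ := hx
      exact isIntegral_of_pow_eq_one' hk (hroot i))
  set wK : Fin d → K := fun i => ⟨ω i, IntermediateField.subset_adjoin ℚ _ ⟨i, rfl⟩⟩ with hwKdef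
  have hwKcoe : ∀ i, (algebraMap K ℂ) (wK i) = ω i := fun i => rfl
  have hwKpow : ∀ i, (wK i) ^ k = 1 := by
    intro i
    apply (algebraMap K ℂ).injective
    rw [map_pow, hwKcoe, map_one]
    exact hroot i
  -- the element X
  set X : K := ∑ n ∈ f.coeff.support, (f.coeff n : K) * ∏ i, (wK i) ^ (n i) with hXdef
  have hXval : (algebraMap K ℂ) X = lEval f ω := by
    rw [hXdef, map_sum, lEval, Finsupp.sum]
    refine Finset.sum_congr rfl fun n _ => ?_
    rw [map_mul, map_intCast, map_prod]
    try (refine congrArg _ (Finset.prod_congr rfl fun i _ => ?_); rw [map_zpow₀, hwKcoe])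
  have hXint : IsIntegral ℤ X := by
    apply IsIntegral.sum
    intro n _
    apply IsIntegral.mul
    · have : ((f.coeff n : ℤ) : K) = algebraMap ℤ K (f.coeff n) := by simp
      rw [this]; exact isIntegral_algebraMap
    · apply IsIntegral.prod
      intro i _
      refine isIntegral_of_pow_eq_one' hk ?_
      rw [← zpow_natCast ((wK i) ^ (n i)), ← zpow_mul, mul_comm, zpow_mul, zpow_natCast,
        hwKpow, one_zpow]
  have hX0 : X ≠ 0 := by
    intro h0
    exact hne (by rw [← hXval, h0, map_zero])
  -- the norm
  set q : ℚ := Algebra.norm ℚ X with hqdef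
  have hqint : IsIntegral ℤ q := Algebra.isIntegral_norm ℚ hXint
  obtain ⟨z, hz⟩ := IsIntegrallyClosed.isIntegral_iff.mp hqint
  have hq0 : q ≠ 0 := by
    rw [hqdef]
    exact Algebra.norm_ne_zero_iff.mpr hX0
  have hqabs : (1:ℝ) ≤ |(q:ℝ)| := by
    have hz0 : z ≠ 0 := by rintro rfl; simp at hz; exact hq0 hz.symm
    have : (1:ℤ) ≤ |z| := Int.one_le_abs hz0
    calc (1:ℝ) ≤ (|z| : ℤ) := by exact_mod_cast this
      _ = |(z : ℝ)| := by push_cast; ring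
      _ = |(q : ℝ)| := by rw [show ((z:ℝ)) = (q:ℝ) by exact_mod_cast congrArg (Rat.cast (K := ℝ)) hz]
  -- norm as product of embeddings
  have hprod : (algebraMap ℚ ℂ) q = ∏ σ : K →ₐ[ℚ] ℂ, σ X :=
    Algebra.norm_eq_prod_embeddings ℚ ℂ X
  have habsprod : (1:ℝ) ≤ ∏ σ : K →ₐ[ℚ] ℂ, ‖σ X‖ := by
    calc (1:ℝ) ≤ |(q:ℝ)| := hqabs
      _ = ‖(algebraMap ℚ ℂ) q‖ := by
          rw [show (algebraMap ℚ ℂ) q = ((q:ℝ):ℂ) by push_cast; simp, Complex.norm_real, Real.norm_eq_abs]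
      _ = ∏ σ : K →ₐ[ℚ] ℂ, ‖σ X‖ := by rw [hprod, norm_prod]
  -- each embedding bounded by suppB
  have hbound : ∀ σ : K →ₐ[ℚ] ℂ, ‖σ X‖ ≤ suppB f := by
    intro σ
    have habsw : ∀ i, ‖σ (wK i)‖ = 1 := by
      intro i
      refine abs_eq_one_of_pow_eq_one hk ?_
      rw [← map_pow, hwKpow, map_one]
    rw [hXdef, map_sum]
    calc ‖∑ n ∈ f.coeff.support, σ ((f.coeff n : K) * ∏ i, (wK i) ^ (n i))‖
        ≤ ∑ n ∈ f.coeff.support, ‖σ ((f.coeff n : K) * ∏ i, (wK i) ^ (n i))‖ :=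
          norm_sum_le _ _
      _ ≤ ∑ n ∈ f.coeff.support, |(f.coeff n : ℝ)| := by
          apply Finset.sum_le_sum
          intro n _
          rw [map_mul, map_intCast, map_prod, norm_mul]
          have h1 : ‖∏ i, σ ((wK i) ^ (n i))‖ = 1 := by
            rw [norm_prod]
            refine Finset.prod_eq_one fun i _ => ?_
            rw [map_zpow₀, norm_zpow, habsw, one_zpow]
          rw [h1, mul_one]
          rw [show ((f.coeff n : ℤ) : ℂ) = ((f.coeff n : ℝ) : ℂ) by push_cast; ring, Complex.norm_real, Real.norm_eq_abs]
      _ = suppB f := rfl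
  -- count embeddings
  set D := Fintype.card (K →ₐ[ℚ] ℂ) with hDdef
  have hcount : D ≤ (omegaGamma Γ).ncard := by
    have hfin := omegaGamma_finite Γ
    set Φ : (K →ₐ[ℚ] ℂ) → (Fin d → ℂ) := fun σ i => σ (wK i) with hΦdef
    have hinj : Function.Injective Φ := by
      intro σ τ h
      apply IntermediateField.adjoin_algHom_ext
      intro x hx
      obtain ⟨i, rfl⟩ := hx
      have : (⟨ω i, IntermediateField.subset_adjoin ℚ _ ⟨i, rfl⟩⟩ : K) = wK i := rfl
      rw [this]
      exact congrFun h i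
    have hmem : ∀ σ : K →ₐ[ℚ] ℂ, Φ σ ∈ omegaGamma Γ := by
      intro σ
      constructor
      · intro i
        refine abs_eq_one_of_pow_eq_one hk ?_
        rw [hΦdef]
        simp only
        rw [← map_pow, hwKpow, map_one]
      · intro m hm
        have hKone : (∏ i, (wK i) ^ (m i)) = 1 := by
          apply (algebraMap K ℂ).injective
          rw [map_prod, map_one]
          have : ∀ i, (algebraMap K ℂ) ((wK i) ^ (m i)) = ω i ^ (m i) := by
            intro i; rw [map_zpow₀, hwKcoe]
          rw [Finset.prod_congr rfl fun i _ => this i]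
          exact hω.2 m hm
        rw [cPow]
        calc (∏ i, (Φ σ i) ^ (m i)) = σ (∏ i, (wK i) ^ (m i)) := by
              rw [map_prod]
              exact Finset.prod_congr rfl fun i _ => by rw [map_zpow₀]
          _ = 1 := by rw [hKone, map_one]
    rw [Set.ncard_eq_toFinset_card _ hfin, hDdef, ← Finset.card_univ]
    refine Finset.card_le_card_of_injOn Φ (fun σ _ => hfin.mem_toFinset.mpr (hmem σ)) ?_
    exact hinj.injOn
  -- isolate the identity embedding
  have hD1 : 1 ≤ D := by
    rw [hDdef]
    exact Fintype.card_pos_iff.mpr ⟨K.val⟩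
  have hB1 : 1 ≤ suppB f := one_le_suppB f hf
  have hval : ‖K.val X‖ = ‖lEval f ω‖ := by rw [show (K.val X) = (algebraMap K ℂ) X from rfl, hXval]
  have hsplit : (∏ σ : K →ₐ[ℚ] ℂ, ‖σ X‖)
      ≤ ‖lEval f ω‖ * (suppB f) ^ (D - 1) := by
    rw [← Finset.mul_prod_erase Finset.univ (fun σ : K →ₐ[ℚ] ℂ => ‖σ X‖) (Finset.mem_univ K.val)]; erw [hval]
    apply mul_le_mul_of_nonneg_left _ (norm_nonneg _)
    calc (∏ σ ∈ Finset.univ.erase K.val, ‖σ X‖)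
        ≤ ∏ _σ ∈ Finset.univ.erase K.val, suppB f :=
          Finset.prod_le_prod (fun σ _ => norm_nonneg _) (fun σ _ => hbound σ)
      _ = (suppB f) ^ (D - 1) := by
          rw [Finset.prod_const, Finset.card_erase_of_mem (Finset.mem_univ _), Finset.card_univ, hDdef]; exact congrArg (fun n => suppB f ^ (n - 1)) (Fintype.card_congr (Equiv.refl _))
  refine habsprod.trans (hsplit.trans ?_)
  apply mul_le_mul_of_nonneg_left _ (norm_nonneg _)
  exact pow_le_pow_right₀ hB1 (by omega)


lemma lipC_nonneg {d : ℕ} (f : LP d) : 0 ≤ lipC f := by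
  refine Finset.sum_nonneg fun n _ => ?_
  refine mul_nonneg (abs_nonneg _) (Finset.sum_nonneg fun i _ => abs_nonneg _)


/-- For a nonzero irreducible `f` (any `d ≥ 1`), every `ε > 0` and every
`ψ : ℕ → ℕ` tending to infinity, eventually every `ω ∈ Ω_Γ` with `f(ω) ≠ 0` satisfies
`dist(ω, U(f)) ≥ e^{-ε ψ(⟨Γ⟩) |Ω_Γ|}`. -/
theorem weak_diophantine_bound {d : ℕ} (hd : 1 ≤ d) (f : LP d) (hf : f ≠ 0)
    (hirr : Irreducible f) (ε : ℝ) (hε : 0 < ε)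
    (ψ : ℕ → ℕ) (hψ : Filter.Tendsto ψ Filter.atTop Filter.atTop) :
    ∃ L : ℕ, 1 ≤ L ∧ ∀ Γ : AddSubgroup (Fin d → ℤ), Γ.FiniteIndex → L < gammaMin Γ →
      ∀ ω ∈ omegaGamma Γ, lEval f ω ≠ 0 → ∀ s ∈ uVar f,
        Real.exp (-(ε * (ψ (gammaMin Γ) : ℝ) * ((omegaGamma Γ).ncard : ℝ))) ≤
          euclid ω s := by
  have hB1 : 1 ≤ suppB f := one_le_suppB f hf
  have hC0 : 0 ≤ lipC f := lipC_nonneg f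
  set B := suppB f with hBdef
  set C : ℝ := lipC f + 1 with hCdef
  have hC1 : 1 ≤ C := by rw [hCdef]; linarith
  have hBC1 : 1 ≤ B * C := by nlinarith
  set c : ℝ := Real.log (B * C) with hcdef
  have hc0 : 0 ≤ c := Real.log_nonneg hBC1
  set K₀ : ℕ := ⌈c / ε⌉₊ + 1 with hK₀def
  have hcK₀ : c ≤ ε * K₀ := by
    have h1 : c / ε ≤ (K₀ : ℝ) := by
      refine (Nat.le_ceil _).trans ?_
      rw [hK₀def]; push_cast; linarith
    calc c = ε * (c / ε) := by field_simp
      _ ≤ ε * K₀ := mul_le_mul_of_nonneg_left h1 hε.le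
  obtain ⟨L₀, hL₀⟩ := Filter.eventually_atTop.mp (hψ.eventually_ge_atTop K₀)
  refine ⟨L₀ + 1, by omega, ?_⟩
  intro Γ hΓ hL ω hω hne s hs
  haveI := hΓ
  set N := (omegaGamma Γ).ncard with hNdef
  have hN1 : 1 ≤ N := one_le_ncard_omegaGamma Γ
  have hψg : K₀ ≤ ψ (gammaMin Γ) := hL₀ _ (by omega)
  -- distance lower bound
  have he0 : 0 ≤ euclid ω s := Real.sqrt_nonneg _
  have hlow : 1 ≤ C * euclid ω s * B ^ (N - 1) := by
    have h1 := alg_lower_bound f hf Γ hω hne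
    have h2 : ‖lEval f ω‖ ≤ C * euclid ω s := by
      have h3 := lEval_lipschitz f hω.1 hs.1
      rw [hs.2, sub_zero] at h3
      calc ‖lEval f ω‖ ≤ lipC f * euclid ω s := h3
        _ ≤ C * euclid ω s := mul_le_mul_of_nonneg_right (by rw [hCdef]; linarith) he0
    calc (1:ℝ) ≤ ‖lEval f ω‖ * B ^ (N - 1) := h1
      _ ≤ (C * euclid ω s) * B ^ (N - 1) :=
          mul_le_mul_of_nonneg_right h2 (pow_nonneg (by linarith) _)
  -- exponential bound
  have hkey : C * B ^ (N - 1) ≤ Real.exp (ε * (ψ (gammaMin Γ) : ℝ) * N) := by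
    have h1 : C * B ^ (N - 1) ≤ (B * C) ^ N := by
      have hBpow : B ^ (N - 1) ≤ B ^ N := pow_le_pow_right₀ hB1 (by omega)
      have hCpow : C ≤ C ^ N := le_self_pow₀ hC1 (by omega)
      calc C * B ^ (N - 1) ≤ C ^ N * B ^ N := by
            refine mul_le_mul hCpow hBpow (pow_nonneg (by linarith) _) (pow_nonneg (by linarith) _)
        _ = (B * C) ^ N := by rw [← mul_pow, mul_comm]
    have h2 : Real.exp (c * N) = (B * C) ^ N := by
      rw [mul_comm, Real.exp_nat_mul, Real.exp_log (show (0:ℝ) < B * C by linarith)]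
    have h3 : c * N ≤ ε * (ψ (gammaMin Γ) : ℝ) * N := by
      have hKψ : (K₀ : ℝ) ≤ (ψ (gammaMin Γ) : ℝ) := by exact_mod_cast hψg
      have : c ≤ ε * (ψ (gammaMin Γ) : ℝ) := by
        refine hcK₀.trans ?_
        exact mul_le_mul_of_nonneg_left hKψ hε.le
      exact mul_le_mul_of_nonneg_right this (Nat.cast_nonneg N)
    refine h1.trans (le_trans (le_of_eq h2.symm) ?_)
    exact Real.exp_le_exp.mpr h3
  -- combine
  set x : ℝ := ε * (ψ (gammaMin Γ) : ℝ) * N with hxdef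
  have hexp : Real.exp (-x) * (C * B ^ (N - 1)) ≤ 1 := by
    calc Real.exp (-x) * (C * B ^ (N - 1)) ≤ Real.exp (-x) * Real.exp x :=
          mul_le_mul_of_nonneg_left hkey (Real.exp_pos _).le
      _ = 1 := by rw [← Real.exp_add]; simp
  calc Real.exp (-x) = Real.exp (-x) * 1 := (mul_one _).symm
    _ ≤ Real.exp (-x) * (C * euclid ω s * B ^ (N - 1)) :=
        mul_le_mul_of_nonneg_left hlow (Real.exp_pos _).le
    _ = (Real.exp (-x) * (C * B ^ (N - 1))) * euclid ω s := by ring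
    _ ≤ 1 * euclid ω s := mul_le_mul_of_nonneg_right hexp he0
    _ = euclid ω s := one_mul _
end

section
/- Let γ be a complex number with |γ| = 1 that is algebraic over ℚ and is not a root of unity. Then for every function ψ: ℕ → ℕ with ψ(n) → ∞ as n → ∞ and every ε > 0, there exists n₀ such that for every n ≥ n₀ and every n-th root of unity ω ∈ ℂ one has |γ − ω| ≥ e^{−ε ψ(n) n}. -/
open scoped BigOperators ENNReal

set_option maxHeartbeats 1000000 in
set_option synthInstance.maxHeartbeats 100000 in
open IntermediateField in
theorem liouville_aux (γ : ℂ) (halg : IsAlgebraic ℚ γ)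
    (hru : ∀ k : ℕ, 0 < k → γ ^ k ≠ 1) :
    ∃ B : ℝ, 1 ≤ B ∧ ∀ n : ℕ, 0 < n → 1 ≤ B ^ n * ‖(γ ^ n - 1)‖ := by
  classical
  have hint : IsIntegral ℚ γ := halg.isIntegral
  haveI : FiniteDimensional ℚ ℚ⟮γ⟯ := IntermediateField.adjoin.finiteDimensional hint
  set K := ℚ⟮γ⟯
  haveI : Algebra.IsAlgebraic ℚ K := Algebra.IsAlgebraic.of_finite ℚ K
  set g : K := AdjoinSimple.gen ℚ γ with hg
  have hgγ : algebraMap K ℂ g = γ := AdjoinSimple.algebraMap_gen ℚ γ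
  have halgg : IsAlgebraic ℤ g := by
    rw [IsFractionRing.isAlgebraic_iff ℤ ℚ K]
    exact Algebra.IsAlgebraic.isAlgebraic g
  obtain ⟨c, hc0, hcint⟩ := halgg.exists_integral_multiple
  obtain ⟨x, hcx⟩ : ∃ x : integralClosure ℤ K, algebraMap ℤ K c * g = (x : K) :=
    ⟨⟨c • g, hcint⟩, (Algebra.smul_def c g).symm⟩
  set a : K := algebraMap ℤ K c with ha
  have hax : a * g = (x : K) := hcx
  have ha0 : a ≠ 0 := by
    simp only [ha, ne_eq]
    exact_mod_cast fun h => hc0 (by exact_mod_cast (by simpa using h : (c : K) = 0))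
  obtain ⟨cc, hcc1, habsc⟩ : ∃ cc : ℝ, 1 ≤ cc ∧ ‖((c : ℂ))‖ = cc :=
    ⟨|(c:ℝ)|, by exact_mod_cast Int.one_le_abs hc0, Complex.norm_intCast c⟩
  obtain ⟨M, hM1, hMb⟩ : ∃ M : ℝ, 1 ≤ M ∧ ∀ σ : K →ₐ[ℚ] ℂ, ‖(σ g)‖ ≤ M :=
    ⟨1 + ∑ σ : K →ₐ[ℚ] ℂ, ‖(σ g)‖,
      le_add_of_nonneg_right (Finset.sum_nonneg fun _ _ => norm_nonneg _),
      fun σ => le_add_of_nonneg_of_le zero_le_one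
        (Finset.single_le_sum (f := fun σ : K →ₐ[ℚ] ℂ => ‖(σ g)‖)
          (fun _ _ => norm_nonneg _) (Finset.mem_univ σ))⟩
  obtain ⟨D, hDcard⟩ : ∃ D : ℕ, ∀ s : Finset (K →ₐ[ℚ] ℂ), s.card ≤ D :=
    ⟨Fintype.card (K →ₐ[ℚ] ℂ), fun s => Finset.card_le_univ s⟩
  set T : ℝ := 2 * cc * M with hT
  have hT1 : 1 ≤ T := by nlinarith
  have hTD : ∀ k : ℕ, (1:ℝ) ≤ T ^ k := fun k => one_le_pow₀ hT1
  refine ⟨cc * T ^ D, ?_, ?_⟩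
  · nlinarith [hTD D]
  intro n hn
  set y : K := a ^ n * (g ^ n - 1) with hy
  have hy_int : IsIntegral ℤ y := by
    have h1 : y = (x : K) ^ n - a ^ n := by rw [hy, ← hax]; ring
    rw [h1]
    exact (x.2.pow n).sub (isIntegral_algebraMap.pow n)
  have hy0 : y ≠ 0 := by
    refine mul_ne_zero (pow_ne_zero _ ha0) (sub_ne_zero.mpr ?_)
    intro h
    exact hru n hn (by rw [← hgγ, ← map_pow, h, map_one])
  have hN0 : Algebra.norm ℚ y ≠ 0 := Algebra.norm_ne_zero_iff.mpr hy0
  obtain ⟨z, hz⟩ := IsIntegrallyClosed.isIntegral_iff.mp (Algebra.isIntegral_norm ℚ hy_int)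
  have hz0 : z ≠ 0 := by rintro rfl; rw [map_zero] at hz; exact hN0 hz.symm
  have hz1 : (1 : ℝ) ≤ |(z : ℝ)| := by exact_mod_cast Int.one_le_abs hz0
  have hprod : ‖(algebraMap ℚ ℂ (Algebra.norm ℚ y))‖
      = ∏ σ : K →ₐ[ℚ] ℂ, ‖(σ y)‖ := by
    rw [Algebra.norm_eq_prod_embeddings, norm_prod]
  have hσy : ∀ σ : K →ₐ[ℚ] ℂ, σ y = (c : ℂ) ^ n * ((σ g) ^ n - 1) := by
    intro σ
    have hσa : σ a = (c : ℂ) := by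
      rw [ha, algebraMap_int_eq, eq_intCast, map_intCast]
    rw [hy, map_mul, map_pow, map_sub, map_pow, map_one, hσa]
  set ι : K →ₐ[ℚ] ℂ := K.val with hι
  have hιg : ι g = γ := hgγ
  have h1 : (1:ℝ) ≤ ∏ σ : K →ₐ[ℚ] ℂ, ‖(σ y)‖ := by
    rw [← hprod, ← hz]
    calc (1:ℝ) ≤ |(z:ℝ)| := hz1
    _ = ‖(algebraMap ℚ ℂ ((z : ℚ)))‖ := by
        rw [eq_ratCast, show (((z:ℚ)):ℂ) = (z:ℂ) by push_cast; ring, Complex.norm_intCast]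
  have hb : ∀ σ : K →ₐ[ℚ] ℂ, ‖(σ y)‖ ≤ T ^ n := by
    intro σ
    rw [hσy σ, norm_mul, norm_pow, habsc]
    have h2 : ‖((σ g) ^ n - 1)‖ ≤ 2 * M ^ n := by
      calc ‖((σ g) ^ n - 1)‖ ≤ ‖((σ g) ^ n)‖ + 1 := by
            simpa using (norm_sub_le ((σ g)^n) 1)
      _ = ‖(σ g)‖ ^ n + 1 := by rw [norm_pow]
      _ ≤ M ^ n + M ^ n :=
            add_le_add (pow_le_pow_left₀ (norm_nonneg _) (hMb σ) n)
              (one_le_pow₀ hM1)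
      _ = 2 * M ^ n := by ring
    have hccn : (0:ℝ) ≤ cc ^ n := by positivity
    have h22 : (2:ℝ) ≤ 2 ^ n := le_self_pow₀ one_le_two hn.ne'
    calc cc ^ n * ‖((σ g) ^ n - 1)‖ ≤ cc ^ n * (2 * M ^ n) :=
          mul_le_mul_of_nonneg_left h2 hccn
    _ ≤ cc ^ n * (2 ^ n * M ^ n) :=
          mul_le_mul_of_nonneg_left
            (mul_le_mul_of_nonneg_right h22 (by positivity)) hccn
    _ = T ^ n := by rw [hT]; ring
  rw [← Finset.mul_prod_erase Finset.univ _ (Finset.mem_univ ι)] at h1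
  have h3 : ∏ σ ∈ Finset.univ.erase ι, ‖(σ y)‖ ≤ (T ^ n) ^ D := by
    calc ∏ σ ∈ Finset.univ.erase ι, ‖(σ y)‖
        ≤ ∏ _σ ∈ Finset.univ.erase ι, T ^ n :=
          Finset.prod_le_prod (fun _ _ => norm_nonneg _) (fun σ _ => hb σ)
    _ = (T ^ n) ^ (Finset.univ.erase ι).card := by rw [Finset.prod_const]
    _ ≤ (T ^ n) ^ D := by
          exact pow_le_pow_right₀ (hTD n) (hDcard _)
  have hιy : ‖(ι y)‖ = cc ^ n * ‖(γ ^ n - 1)‖ := by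
    rw [hσy ι, norm_mul, norm_pow, habsc, hιg]
  have key : (cc * T ^ D) ^ n * ‖(γ ^ n - 1)‖
      = (cc ^ n * ‖(γ ^ n - 1)‖) * (T ^ n) ^ D := by
    rw [mul_pow, ← pow_mul, ← pow_mul, mul_comm D n]; ring
  rw [key, ← hιy]
  calc (1:ℝ) ≤ ‖(ι y)‖ * ∏ σ ∈ Finset.univ.erase ι, ‖(σ y)‖ := h1
  _ ≤ ‖(ι y)‖ * (T ^ n) ^ D :=
      mul_le_mul_of_nonneg_left h3 (norm_nonneg _)

/-- Weak Gelfond bound: if `γ ∈ 𝕊` is algebraic and not a root of unity,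
then for `ψ → ∞` and `ε > 0`, eventually every `n`-th root of unity `ω` satisfies
`|γ - ω| ≥ e^{-ε ψ(n) n}`. -/
theorem weak_gelfond (γ : ℂ) (hγ : ‖γ‖ = 1) (halg : IsAlgebraic ℚ γ)
    (hru : ∀ k : ℕ, 0 < k → γ ^ k ≠ 1)
    (ψ : ℕ → ℕ) (hψ : Filter.Tendsto ψ Filter.atTop Filter.atTop) (ε : ℝ) (hε : 0 < ε) :
    ∃ n₀ : ℕ, ∀ n ≥ n₀, ∀ ω : ℂ, ω ^ n = 1 →
      Real.exp (-(ε * (ψ n : ℝ) * (n : ℝ))) ≤ ‖γ - ω‖ := by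
  obtain ⟨B, hB1, hB⟩ := liouville_aux γ halg hru
  set C : ℝ := Real.log (2 * B) with hC
  have h2B : (0:ℝ) < 2 * B := by linarith
  have hC0 : 0 ≤ C := Real.log_nonneg (by linarith)
  obtain ⟨n₀, hn₀⟩ := Filter.eventually_atTop.mp (hψ.eventually_ge_atTop ⌈C / ε⌉₊)
  refine ⟨max n₀ 1, fun n hn ω hω => ?_⟩
  have hn1 : 1 ≤ n := le_trans (le_max_right _ _) hn
  have hnp : 0 < n := hn1
  have hωu : ω ∈ Polynomial.nthRootsFinset n (1:ℂ) := (Polynomial.mem_nthRootsFinset hnp 1).mpr hω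
  have hprim := Complex.isPrimitiveRoot_exp n hnp.ne'
  have hfact : γ ^ n - 1 = ∏ ζ ∈ Polynomial.nthRootsFinset n (1:ℂ), (γ - ζ) := by
    have h := congrArg (Polynomial.eval γ) (Polynomial.X_pow_sub_one_eq_prod hnp hprim)
    simpa [Polynomial.eval_prod] using h
  have hb2 : ‖(∏ ζ ∈ (Polynomial.nthRootsFinset n (1:ℂ)).erase ω, (γ - ζ))‖
      ≤ 2 ^ n := by
    rw [norm_prod]
    have hbd : ∀ ζ ∈ (Polynomial.nthRootsFinset n (1:ℂ)).erase ω,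
        ‖(γ - ζ)‖ ≤ 2 := by
      intro ζ hζ
      have hζn : ζ ^ n = 1 :=
        (Polynomial.mem_nthRootsFinset hnp 1).mp (Finset.mem_of_mem_erase hζ)
      have hζ1 : ‖ζ‖ = 1 := Complex.norm_eq_one_of_pow_eq_one hζn hnp.ne'
      calc ‖(γ - ζ)‖ ≤ ‖γ‖ + ‖ζ‖ :=
            norm_sub_le γ ζ
      _ = 2 := by rw [hγ, hζ1]; norm_num
    calc ∏ ζ ∈ (Polynomial.nthRootsFinset n (1:ℂ)).erase ω, ‖(γ - ζ)‖
        ≤ ∏ _ζ ∈ (Polynomial.nthRootsFinset n (1:ℂ)).erase ω, (2:ℝ) :=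
          Finset.prod_le_prod (fun _ _ => norm_nonneg _) hbd
    _ = 2 ^ ((Polynomial.nthRootsFinset n (1:ℂ)).erase ω).card := by rw [Finset.prod_const]
    _ ≤ 2 ^ n := by
        apply pow_le_pow_right₀ one_le_two
        calc ((Polynomial.nthRootsFinset n (1:ℂ)).erase ω).card
            ≤ (Polynomial.nthRootsFinset n (1:ℂ)).card :=
              Finset.card_le_card (Finset.erase_subset _ _)
        _ ≤ n := le_of_eq hprim.card_nthRootsFinset
  have hsplit : ‖(γ ^ n - 1)‖ ≤ ‖(γ - ω)‖ * 2 ^ n := by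
    rw [hfact, ← Finset.mul_prod_erase _ _ hωu, norm_mul]
    exact mul_le_mul_of_nonneg_left hb2 (norm_nonneg _)
  have hkey : 1 ≤ (2*B)^n * ‖(γ - ω)‖ := by
    calc (1:ℝ) ≤ B ^ n * ‖(γ ^ n - 1)‖ := hB n hnp
    _ ≤ B ^ n * (‖(γ - ω)‖ * 2 ^ n) :=
        mul_le_mul_of_nonneg_left hsplit (by positivity)
    _ = (2*B)^n * ‖(γ - ω)‖ := by rw [mul_pow]; ring
  have hfin : ((2*B)^n)⁻¹ ≤ ‖(γ - ω)‖ := by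
    rw [inv_eq_one_div, div_le_iff₀ (by positivity)]
    linarith [hkey]
  have hexp : Real.exp (-(C * n)) = ((2*B)^n)⁻¹ := by
    rw [Real.exp_neg, mul_comm, Real.exp_nat_mul, Real.exp_log h2B]
  calc Real.exp (-(ε * (ψ n : ℝ) * (n : ℝ))) ≤ Real.exp (-(C * n)) := by
        apply Real.exp_le_exp.mpr
        apply neg_le_neg
        apply mul_le_mul_of_nonneg_right _ (Nat.cast_nonneg n)
        have hψn : (⌈C / ε⌉₊ : ℝ) ≤ (ψ n : ℝ) := by
          exact_mod_cast hn₀ n (le_trans (le_max_left _ _) hn)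
        have : C / ε ≤ (ψ n : ℝ) := le_trans (Nat.le_ceil _) hψn
        calc C = ε * (C / ε) := by field_simp
        _ ≤ ε * (ψ n : ℝ) := mul_le_mul_of_nonneg_left this hε.le
  _ = ((2*B)^n)⁻¹ := hexp
  _ ≤ ‖(γ - ω)‖ := hfin
end
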